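/- arXiv:1607.04435 — 3 statements merged into one kernel-verified Lean document; each statement's English description precedes it below -/
import Mathlib

section
/- In ℚ[[z]] the generating functions R and B satisfy the two functional equations R(z)·(1 − z − B(z)) = 1 and (1 − z²)·B(z) = z^{2s}·(R(z) − B(z) − T_m(z)). -/
open scoped Classical

/-- `x` is an endpoint of some pair in `P`. -/
def Paired (P : Finset (ℕ × ℕ)) (x : ℕ) : Prop := ∃ p ∈ P, p.1 = x ∨ p.2 = x

/-- Conditions (i)–(iii): `P` is a set of pairs `(i,j)`, `1 ≤ i < j ≤ n`, each index in at
most one pair, noncrossing, and every hairpin loop has at least `m` unpaired bases. -/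
def SecBase (m n : ℕ) (P : Finset (ℕ × ℕ)) : Prop :=
  (∀ p ∈ P, 1 ≤ p.1 ∧ p.1 < p.2 ∧ p.2 ≤ n) ∧
  (∀ p ∈ P, ∀ q ∈ P, p ≠ q → p.1 ≠ q.1 ∧ p.1 ≠ q.2 ∧ p.2 ≠ q.1 ∧ p.2 ≠ q.2) ∧
  (∀ p ∈ P, ∀ q ∈ P, ¬(p.1 < q.1 ∧ q.1 < p.2 ∧ p.2 < q.2)) ∧
  (∀ p ∈ P, (∀ x, p.1 < x → x < p.2 → ¬Paired P x) → m ≤ p.2 - p.1 - 1)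

/-- Condition (iv): every maximal stack of `P` has length at least `s`. -/
def StackCond (s : ℕ) (P : Finset (ℕ × ℕ)) : Prop :=
  ∀ p ∈ P, (p.1 - 1, p.2 + 1) ∉ P → ∃ t, s ≤ t ∧ ∀ a < t, (p.1 + a, p.2 - a) ∈ P

/-- `P` is a secondary structure of length `n` with minimum stem size `s` and minimum
hairpin size `m`. -/
def IsSecStruct (s m n : ℕ) (P : Finset (ℕ × ℕ)) : Prop :=
  SecBase m n P ∧ StackCond s P

/-- The (finite) set of all secondary structures of length `n`. -/
noncomputable def secFinset (s m n : ℕ) : Finset (Finset (ℕ × ℕ)) :=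
  (Finset.range (n + 1) ×ˢ Finset.range (n + 1)).powerset.filter (IsSecStruct s m n)

/-- `r n`: the number of secondary structures of length `n`. -/
noncomputable def secCount (s m n : ℕ) : ℕ := (secFinset s m n).card

/-- `b n`: the number of secondary structures of length `n` containing the pair `(1, n)`. -/
noncomputable def secCountB (s m n : ℕ) : ℕ :=
  ((secFinset s m n).filter (fun P => (1, n) ∈ P)).card

/-- The generating function `R(z) = ∑ r_n z^n` in `ℚ[[z]]`. -/
noncomputable def Rgf (s m : ℕ) : PowerSeries ℚ :=
  PowerSeries.mk fun n => (secCount s m n : ℚ)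

/-- The generating function `B(z) = ∑ b_n z^n` in `ℚ[[z]]`. -/
noncomputable def Bgf (s m : ℕ) : PowerSeries ℚ :=
  PowerSeries.mk fun n => (secCountB s m n : ℚ)

/-- `T_m(z) = 1 + z + ⋯ + z^{m-1}` in `ℚ[[z]]`. -/
noncomputable def Tmgf (m : ℕ) : PowerSeries ℚ :=
  ∑ j ∈ Finset.range m, (PowerSeries.X : PowerSeries ℚ) ^ j

section Basic

lemma mem_secFinset {s m n : ℕ} {P : Finset (ℕ × ℕ)} :
    P ∈ secFinset s m n ↔ IsSecStruct s m n P := by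
  constructor
  · intro h; exact (Finset.mem_filter.mp h).2
  · intro h
    refine Finset.mem_filter.mpr ⟨Finset.mem_powerset.mpr ?_, h⟩
    intro p hp
    obtain ⟨h1, h2, h3⟩ := h.1.1 p hp
    simp only [Finset.mem_product, Finset.mem_range]
    omega

lemma empty_isSecStruct (s m n : ℕ) : IsSecStruct s m n (∅ : Finset (ℕ × ℕ)) := by
  refine ⟨⟨?_, ?_, ?_, ?_⟩, ?_⟩ <;> simp [StackCond]

/-- any structure on fewer than `m+2` points is empty -/
lemma sec_small_empty {s m k : ℕ} {P : Finset (ℕ × ℕ)} (h : IsSecStruct s m k P)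
    (hk : k < m + 2) : P = ∅ := by
  by_contra hne
  obtain ⟨p, hp, hmin⟩ := Finset.exists_min_image P (fun p => p.2 - p.1)
    (Finset.nonempty_iff_ne_empty.mpr hne)
  obtain ⟨⟨hb, hd, hnc, hhp⟩, _⟩ := h
  have h1 := hb p hp
  have : m ≤ p.2 - p.1 - 1 := by
    refine hhp p hp ?_
    rintro x hx1 hx2 ⟨q, hq, hxq⟩
    have hqb := hb q hq
    have hqp : q ≠ p := by
      rintro rfl; omega
    have hdist := hd p hp q hq (Ne.symm hqp)
    have hncpq := hnc p hp q hq
    have hncqp := hnc q hq p hp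
    have hlt : q.2 - q.1 < p.2 - p.1 := by
      rcases hxq with h' | h' <;> omega
    have := hmin q hq
    omega
  omega

lemma secFinset_small {s m k : ℕ} (hk : k < m + 2) :
    secFinset s m k = {∅} := by
  ext P
  simp only [mem_secFinset, Finset.mem_singleton]
  constructor
  · intro h; exact sec_small_empty h hk
  · rintro rfl; exact empty_isSecStruct s m k

lemma secCount_small {s m k : ℕ} (hk : k < m + 2) : secCount s m k = 1 := by
  rw [secCount, secFinset_small hk]; simp

lemma secCountB_small {s m k : ℕ} (hk : k < m + 2) : secCountB s m k = 0 := by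
  rw [secCountB, secFinset_small hk, Finset.filter_singleton]
  simp

/-- if `(1,n) ∈ P` then `2s ≤ n`. -/
lemma b_lower {s m n : ℕ} (hs : 1 ≤ s) {P : Finset (ℕ × ℕ)}
    (h : IsSecStruct s m n P) (hP : (1, n) ∈ P) : 2 * s ≤ n := by
  obtain ⟨⟨hb, hd, hnc, hhp⟩, hst⟩ := h
  have hnp : (((1:ℕ), n).1 - 1, ((1:ℕ),n).2 + 1) ∉ P := by
    intro hmem
    have h1 := (hb _ hmem).1
    omega
  obtain ⟨t, hts, hrun⟩ := hst (1, n) hP hnp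
  have h2 := hrun (s - 1) (by omega)
  have h3 := hb _ h2
  simp only [Prod.fst, Prod.snd] at h3
  omega

lemma secCountB_zero_of_lt {s m n : ℕ} (hs : 1 ≤ s) (hn : n < 2 * s) :
    secCountB s m n = 0 := by
  rw [secCountB, Finset.card_eq_zero, Finset.filter_eq_empty_iff]
  intro P hP hmem
  exact absurd (b_lower hs (mem_secFinset.mp hP) hmem) (by omega)

end Basic

section Off

/-- A "secondary structure" living on the interval `(lo, lo+k]`. -/
def OffStruct (s m lo k : ℕ) (Q : Finset (ℕ × ℕ)) : Prop :=
  (∀ p ∈ Q, lo + 1 ≤ p.1 ∧ p.1 < p.2 ∧ p.2 ≤ lo + k) ∧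
  (∀ p ∈ Q, ∀ q ∈ Q, p ≠ q → p.1 ≠ q.1 ∧ p.1 ≠ q.2 ∧ p.2 ≠ q.1 ∧ p.2 ≠ q.2) ∧
  (∀ p ∈ Q, ∀ q ∈ Q, ¬(p.1 < q.1 ∧ q.1 < p.2 ∧ p.2 < q.2)) ∧
  (∀ p ∈ Q, (∀ x, p.1 < x → x < p.2 → ¬Paired Q x) → m ≤ p.2 - p.1 - 1) ∧
  (∀ p ∈ Q, (p.1 - 1, p.2 + 1) ∉ Q → ∃ t, s ≤ t ∧ ∀ a < t, (p.1 + a, p.2 - a) ∈ Q)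

lemma OffStruct.toSec {s m lo k : ℕ} {Q : Finset (ℕ × ℕ)} (h : OffStruct s m lo k Q) :
    IsSecStruct s m (lo + k) Q := by
  obtain ⟨hb, hd, hnc, hhp, hst⟩ := h
  exact ⟨⟨fun p hp => by have := hb p hp; omega, hd, hnc, hhp⟩, hst⟩

lemma IsSecStruct.toOff {s m n : ℕ} {Q : Finset (ℕ × ℕ)} (h : IsSecStruct s m n Q) :
    OffStruct s m 0 n Q := by
  obtain ⟨⟨hb, hd, hnc, hhp⟩, hst⟩ := h
  exact ⟨fun p hp => by have := hb p hp; omega, hd, hnc, hhp, hst⟩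

lemma image_sub_add {d : ℕ} {Q : Finset (ℕ × ℕ)} (h : ∀ p ∈ Q, d < p.1 ∧ d < p.2) :
    ((Q.image fun p => (p.1 - d, p.2 - d)).image fun p => (p.1 + d, p.2 + d)) = Q := by
  rw [Finset.image_image]
  have : Finset.image ((fun p : ℕ × ℕ => (p.1 + d, p.2 + d)) ∘ fun p => (p.1 - d, p.2 - d)) Q
      = Finset.image id Q := by
    apply Finset.image_congr
    intro p hp
    have := h p hp
    simp only [Function.comp_apply, id_eq, Prod.ext_iff]
    constructor <;> (try simp) <;> omega
  rw [this, Finset.image_id]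

lemma image_add_sub {d : ℕ} {Q : Finset (ℕ × ℕ)} :
    ((Q.image fun p => (p.1 + d, p.2 + d)).image fun p => (p.1 - d, p.2 - d)) = Q := by
  rw [Finset.image_image]
  have : Finset.image ((fun p : ℕ × ℕ => (p.1 - d, p.2 - d)) ∘ fun p => (p.1 + d, p.2 + d)) Q
      = Finset.image id Q := by
    apply Finset.image_congr
    intro p hp
    simp only [Function.comp_apply, id_eq, Prod.ext_iff]
    constructor <;> (try simp) <;> omega
  rw [this, Finset.image_id]

lemma OffStruct.shiftDown {s m lo k : ℕ} {Q : Finset (ℕ × ℕ)} (h : OffStruct s m lo k Q) :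
    OffStruct s m 0 k (Q.image fun p => (p.1 - lo, p.2 - lo)) := by
  obtain ⟨hb, hd, hnc, hhp, hst⟩ := h
  have hmem : ∀ p : ℕ × ℕ, (p ∈ Q.image fun q => (q.1 - lo, q.2 - lo)) ↔
      (1 ≤ p.1 ∧ p.1 < p.2 ∧ (p.1 + lo, p.2 + lo) ∈ Q) := by
    intro p
    rw [Finset.mem_image]
    constructor
    · rintro ⟨q, hq, rfl⟩
      have h1 := hb q hq
      refine ⟨by omega, by omega, ?_⟩
      have e : (q.1 - lo + lo, q.2 - lo + lo) = q := by
        rw [Prod.ext_iff]; constructor <;> (try simp) <;> omega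
      show (q.1 - lo + lo, q.2 - lo + lo) ∈ Q
      rw [e]; exact hq
    · rintro ⟨h1, h2, h3⟩
      refine ⟨(p.1 + lo, p.2 + lo), h3, ?_⟩
      obtain ⟨a, b⟩ := p
      simp only [Prod.mk.injEq]
      constructor <;> omega
  refine ⟨?_, ?_, ?_, ?_, ?_⟩
  · intro p hp
    rw [hmem] at hp
    have := hb _ hp.2.2
    simp only [Prod.fst, Prod.snd] at this
    omega
  · intro p hp q hq hne
    rw [hmem] at hp hq
    have hd' := hd _ hp.2.2 _ hq.2.2 (by
      intro hc
      apply hne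
      rw [Prod.mk.injEq] at hc
      obtain ⟨a, b⟩ := p; obtain ⟨c, d⟩ := q
      simp only [Prod.fst, Prod.snd] at hc ⊢
      rw [Prod.mk.injEq]
      omega)
    simp only [Prod.fst, Prod.snd] at hd'
    omega
  · intro p hp q hq
    rw [hmem] at hp hq
    have := hnc _ hp.2.2 _ hq.2.2
    simp only [Prod.fst, Prod.snd] at this
    omega
  · intro p hp hint
    rw [hmem] at hp
    have hres := hhp _ hp.2.2 (by
      intro x hx1 hx2 hpx
      simp only [Prod.fst, Prod.snd] at hx1 hx2
      obtain ⟨r, hr, he⟩ := hpx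
      have hrb := hb r hr
      refine hint (x - lo) (by omega) (by omega) ?_
      refine ⟨(r.1 - lo, r.2 - lo), Finset.mem_image.mpr ⟨r, hr, rfl⟩, ?_⟩
      simp only [Prod.fst, Prod.snd]
      omega)
    simp only [Prod.fst, Prod.snd] at hres
    omega
  · intro p hp hpred
    rw [hmem] at hp
    obtain ⟨hp1, hp12, hpQ⟩ := hp
    have hpredQ : (p.1 + lo - 1, p.2 + lo + 1) ∉ Q := by
      intro hc
      have hcb := hb _ hc
      simp only [Prod.fst, Prod.snd] at hcb
      apply hpred
      rw [hmem]
      simp only [Prod.fst, Prod.snd]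
      refine ⟨by omega, by omega, ?_⟩
      have e : (p.1 - 1 + lo, p.2 + 1 + lo) = (p.1 + lo - 1, p.2 + lo + 1) := by
        rw [Prod.mk.injEq]; omega
      rw [e]; exact hc
    obtain ⟨t, hts, hrun⟩ := hst (p.1 + lo, p.2 + lo) hpQ (by
      simp only [Prod.fst, Prod.snd]
      exact hpredQ)
    refine ⟨t, hts, fun a ha => ?_⟩
    have hm := hrun a ha
    simp only [Prod.fst, Prod.snd] at hm
    have hmb := hb _ hm
    simp only [Prod.fst, Prod.snd] at hmb
    rw [hmem]
    simp only [Prod.fst, Prod.snd]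
    refine ⟨by omega, by omega, ?_⟩
    have e : (p.1 + a + lo, p.2 - a + lo) = (p.1 + lo + a, p.2 + lo - a) := by
      rw [Prod.mk.injEq]; omega
    rw [e]; exact hm

lemma OffStruct.shiftUp {s m k : ℕ} {Q : Finset (ℕ × ℕ)} (h : OffStruct s m 0 k Q) (d : ℕ) :
    OffStruct s m d k (Q.image fun p => (p.1 + d, p.2 + d)) := by
  obtain ⟨hb, hd, hnc, hhp, hst⟩ := h
  have hmem : ∀ p : ℕ × ℕ, (p ∈ Q.image fun q => (q.1 + d, q.2 + d)) ↔
      (d + 1 ≤ p.1 ∧ d + 1 ≤ p.2 ∧ (p.1 - d, p.2 - d) ∈ Q) := by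
    intro p
    rw [Finset.mem_image]
    constructor
    · rintro ⟨q, hq, rfl⟩
      have h1 := hb q hq
      simp only [Prod.fst, Prod.snd] at h1 ⊢
      refine ⟨by omega, by omega, ?_⟩
      have e : (q.1 + d - d, q.2 + d - d) = q := by
        rw [Prod.ext_iff]; constructor <;> (try simp) <;> omega
      show (q.1 + d - d, q.2 + d - d) ∈ Q
      rw [e]; exact hq
    · rintro ⟨h1, h2, h3⟩
      refine ⟨(p.1 - d, p.2 - d), h3, ?_⟩
      obtain ⟨a, b⟩ := p
      rw [Prod.mk.injEq]
      simp only [Prod.fst, Prod.snd] at h1 h2 ⊢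
      constructor <;> omega
  refine ⟨?_, ?_, ?_, ?_, ?_⟩
  · intro p hp
    rw [hmem] at hp
    have := hb _ hp.2.2
    simp only [Prod.fst, Prod.snd] at this
    omega
  · intro p hp q hq hne
    rw [hmem] at hp hq
    have hd' := hd _ hp.2.2 _ hq.2.2 (by
      intro hc
      apply hne
      rw [Prod.mk.injEq] at hc
      obtain ⟨a, b⟩ := p; obtain ⟨c, e⟩ := q
      simp only [Prod.fst, Prod.snd] at hc hp hq ⊢
      rw [Prod.mk.injEq]
      omega)
    simp only [Prod.fst, Prod.snd] at hd'
    omega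
  · intro p hp q hq
    rw [hmem] at hp hq
    have := hnc _ hp.2.2 _ hq.2.2
    simp only [Prod.fst, Prod.snd] at this
    omega
  · intro p hp hint
    rw [hmem] at hp
    have hpb := hb _ hp.2.2
    simp only [Prod.fst, Prod.snd] at hpb
    have hres := hhp _ hp.2.2 (by
      intro x hx1 hx2 hpx
      simp only [Prod.fst, Prod.snd] at hx1 hx2
      obtain ⟨r, hr, he⟩ := hpx
      have hrb := hb r hr
      refine hint (x + d) (by omega) (by omega) ?_
      refine ⟨(r.1 + d, r.2 + d), Finset.mem_image.mpr ⟨r, hr, rfl⟩, ?_⟩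
      simp only [Prod.fst, Prod.snd]
      omega)
    simp only [Prod.fst, Prod.snd] at hres
    omega
  · intro p hp hpred
    rw [hmem] at hp
    obtain ⟨hp1, hp2', hpQ⟩ := hp
    have hpb := hb _ hpQ
    simp only [Prod.fst, Prod.snd] at hpb
    have hpredQ : (p.1 - d - 1, p.2 - d + 1) ∉ Q := by
      intro hc
      have hcb := hb _ hc
      simp only [Prod.fst, Prod.snd] at hcb
      apply hpred
      rw [hmem]
      simp only [Prod.fst, Prod.snd]
      refine ⟨by omega, by omega, ?_⟩
      have e : (p.1 - 1 - d, p.2 + 1 - d) = (p.1 - d - 1, p.2 - d + 1) := by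
        rw [Prod.mk.injEq]; omega
      rw [e]; exact hc
    obtain ⟨t, hts, hrun⟩ := hst (p.1 - d, p.2 - d) hpQ (by
      simp only [Prod.fst, Prod.snd]
      exact hpredQ)
    refine ⟨t, hts, fun a ha => ?_⟩
    have hm := hrun a ha
    simp only [Prod.fst, Prod.snd] at hm
    have hmb := hb _ hm
    simp only [Prod.fst, Prod.snd] at hmb
    rw [hmem]
    simp only [Prod.fst, Prod.snd]
    refine ⟨by omega, by omega, ?_⟩
    have e : (p.1 + a - d, p.2 - a - d) = (p.1 - d + a, p.2 - d - a) := by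
      rw [Prod.mk.injEq]; omega
    rw [e]; exact hm

end Off

section Segment

lemma segmentStruct {s m n lo hi : ℕ} {P : Finset (ℕ × ℕ)} (h : IsSecStruct s m n P)
    (H1 : ∀ p ∈ P, (lo < p.1 ∧ p.2 ≤ hi) ∨ p.2 ≤ lo ∨ hi < p.1 ∨ (p.1 ≤ lo ∧ hi < p.2))
    (H2 : (lo + 1, hi) ∈ P → (lo, hi + 1) ∈ P → ∀ a, a < s → (lo + 1 + a, hi - a) ∈ P) :
    OffStruct s m lo (hi - lo) (P.filter fun p => lo < p.1 ∧ p.2 ≤ hi) := by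
  obtain ⟨⟨hb, hd, hnc, hhp⟩, hst⟩ := h
  have hmem : ∀ p : ℕ × ℕ, (p ∈ P.filter fun p => lo < p.1 ∧ p.2 ≤ hi) ↔
      (p ∈ P ∧ lo < p.1 ∧ p.2 ≤ hi) := fun p => Finset.mem_filter
  refine ⟨?_, ?_, ?_, ?_, ?_⟩
  · intro p hp; rw [hmem] at hp; have := hb p hp.1; omega
  · intro p hp q hq hne; rw [hmem] at hp hq; exact hd p hp.1 q hq.1 hne
  · intro p hp q hq; rw [hmem] at hp hq; exact hnc p hp.1 q hq.1
  · intro p hp hint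
    rw [hmem] at hp
    refine hhp p hp.1 ?_
    rintro x hx1 hx2 ⟨r, hr, he⟩
    refine hint x hx1 hx2 ⟨r, ?_, he⟩
    rw [hmem]
    have hrb := hb r hr
    have hH1 := H1 r hr
    have hpb := hb p hp.1
    exact ⟨hr, by omega⟩
  · intro p hp hpred
    rw [hmem] at hp
    obtain ⟨hpP, hplo, hphi⟩ := hp
    have hpb := hb p hpP
    by_cases hPpred : (p.1 - 1, p.2 + 1) ∈ P
    · have hH1 := H1 _ hPpred
      have hbp := hb _ hPpred
      simp only [Prod.fst, Prod.snd] at hH1 hbp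
      have hnotU : ¬(lo < p.1 - 1 ∧ p.2 + 1 ≤ hi) := by
        intro hc
        exact hpred (by rw [hmem]; exact ⟨hPpred, by simp only [Prod.fst, Prod.snd]; omega⟩)
      have hp1 : p.1 = lo + 1 ∧ p.2 = hi := by omega
      have hpe : p = (lo + 1, hi) := by
        rw [Prod.ext_iff]; exact ⟨hp1.1, hp1.2⟩
      have hprede : ((lo : ℕ), hi + 1) = (p.1 - 1, p.2 + 1) := by
        rw [Prod.ext_iff]; constructor <;> (try simp) <;> omega
      have hrun := H2 (hpe ▸ hpP) (hprede ▸ hPpred)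
      refine ⟨s, le_refl s, ?_⟩
      intro a ha
      have hmem2 := hrun a ha
      have hb2 := hb _ hmem2
      simp only [Prod.fst, Prod.snd] at hb2
      rw [hmem]
      have he2 : (p.1 + a, p.2 - a) = (lo + 1 + a, hi - a) := by
        rw [Prod.ext_iff]; constructor <;> (try simp) <;> omega
      rw [he2]
      exact ⟨hmem2, by simp only [Prod.fst, Prod.snd]; omega⟩
    · obtain ⟨t, hts, hrun⟩ := hst p hpP hPpred
      refine ⟨t, hts, fun a ha => ?_⟩
      have h' := hrun a ha
      rw [hmem]
      exact ⟨h', by simp only [Prod.fst, Prod.snd]; omega⟩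

end Segment

section Glue

lemma appendStruct {s m j k : ℕ} {P₁ Q : Finset (ℕ × ℕ)}
    (h1 : OffStruct s m 0 j P₁) (h2 : OffStruct s m j k Q) :
    OffStruct s m 0 (j + k) (P₁ ∪ Q) := by
  obtain ⟨hb1, hd1, hnc1, hhp1, hst1⟩ := h1
  obtain ⟨hb2, hd2, hnc2, hhp2, hst2⟩ := h2
  have hmem : ∀ p : ℕ × ℕ, p ∈ P₁ ∪ Q ↔ p ∈ P₁ ∨ p ∈ Q := fun p => Finset.mem_union
  refine ⟨?_, ?_, ?_, ?_, ?_⟩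
  · intro p hp
    rw [hmem] at hp
    rcases hp with hp | hp
    · have := hb1 p hp; omega
    · have := hb2 p hp; omega
  · intro p hp q hq hne
    rw [hmem] at hp hq
    rcases hp with hp | hp <;> rcases hq with hq | hq
    · exact hd1 p hp q hq hne
    · have := hb1 p hp; have := hb2 q hq; omega
    · have := hb2 p hp; have := hb1 q hq; omega
    · exact hd2 p hp q hq hne
  · intro p hp q hq
    rw [hmem] at hp hq
    rcases hp with hp | hp <;> rcases hq with hq | hq
    · exact hnc1 p hp q hq
    · have := hb1 p hp; have := hb2 q hq; omega
    · have := hb2 p hp; have := hb1 q hq; omega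
    · exact hnc2 p hp q hq
  · intro p hp hint
    rw [hmem] at hp
    rcases hp with hp | hp
    · refine hhp1 p hp ?_
      rintro x hx1 hx2 ⟨r, hr, he⟩
      exact hint x hx1 hx2 ⟨r, Finset.mem_union_left _ hr, he⟩
    · refine hhp2 p hp ?_
      rintro x hx1 hx2 ⟨r, hr, he⟩
      exact hint x hx1 hx2 ⟨r, Finset.mem_union_right _ hr, he⟩
  · intro p hp hpred
    rw [hmem] at hp
    rcases hp with hp | hp
    · obtain ⟨t, hts, hrun⟩ := hst1 p hp (fun hc => hpred (Finset.mem_union_left _ hc))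
      exact ⟨t, hts, fun a ha => Finset.mem_union_left _ (hrun a ha)⟩
    · obtain ⟨t, hts, hrun⟩ := hst2 p hp (fun hc => hpred (Finset.mem_union_right _ hc))
      exact ⟨t, hts, fun a ha => Finset.mem_union_right _ (hrun a ha)⟩

lemma nestStruct {s m c k : ℕ} (hc : 1 ≤ c) {Q : Finset (ℕ × ℕ)}
    (h2 : OffStruct s m c k Q)
    (N1 : Q = ∅ → m ≤ k)
    (N2 : s ≤ c ∨ ∃ t, s ≤ c + t ∧ ∀ b < t, (c + 1 + b, c + k - b) ∈ Q) :
    OffStruct s m 0 (k + 2 * c)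
      (((Finset.range c).image fun a => (1 + a, k + 2 * c - a)) ∪ Q) := by
  obtain ⟨hb, hd, hnc, hhp, hst⟩ := h2
  set n := k + 2 * c with hn
  set St := (Finset.range c).image fun a => (1 + a, n - a) with hSt
  have hStmem : ∀ p : ℕ × ℕ, p ∈ St ↔ (1 ≤ p.1 ∧ p.1 ≤ c ∧ p.1 + p.2 = n + 1) := by
    intro p
    rw [hSt, Finset.mem_image]
    constructor
    · rintro ⟨a, ha, rfl⟩
      rw [Finset.mem_range] at ha
      simp only [Prod.fst, Prod.snd]
      omega
    · rintro ⟨h1', h2', h3'⟩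
      refine ⟨p.1 - 1, Finset.mem_range.mpr (by omega), ?_⟩
      rw [Prod.ext_iff]
      constructor <;> (try simp) <;> omega
  have hmem : ∀ p : ℕ × ℕ, p ∈ St ∪ Q ↔ p ∈ St ∨ p ∈ Q := fun p => Finset.mem_union
  refine ⟨?_, ?_, ?_, ?_, ?_⟩
  · intro p hp
    rw [hmem] at hp
    rcases hp with hp | hp
    · rw [hStmem] at hp; omega
    · have := hb p hp; omega
  · intro p hp q hq hne
    have hne' : ¬(p.1 = q.1 ∧ p.2 = q.2) := fun ⟨e1, e2⟩ => hne (Prod.ext_iff.mpr ⟨e1, e2⟩)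
    rw [hmem] at hp hq
    rcases hp with hp | hp <;> rcases hq with hq | hq
    · rw [hStmem] at hp hq; omega
    · rw [hStmem] at hp; have := hb q hq; omega
    · rw [hStmem] at hq; have := hb p hp; omega
    · exact hd p hp q hq hne
  · intro p hp q hq
    rw [hmem] at hp hq
    rcases hp with hp | hp <;> rcases hq with hq | hq
    · rw [hStmem] at hp hq; omega
    · rw [hStmem] at hp; have := hb q hq; omega
    · rw [hStmem] at hq; have := hb p hp; omega
    · exact hnc p hp q hq
  · intro p hp hint
    rw [hmem] at hp
    rcases hp with hp | hp
    · rw [hStmem] at hp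
      rcases Nat.lt_or_ge p.1 c with hlt | hge
      · exfalso
        refine hint (p.1 + 1) (by omega) (by omega)
          ⟨(p.1 + 1, n - p.1), Finset.mem_union_left _ (hStmem _ |>.mpr ?_), Or.inl rfl⟩
        simp only [Prod.fst, Prod.snd]
        omega
      · rcases Finset.eq_empty_or_nonempty Q with hQe | ⟨q, hq⟩
        · have := N1 hQe; omega
        · exfalso
          have hqb := hb q hq
          exact hint q.1 (by omega) (by omega)
            ⟨q, Finset.mem_union_right _ hq, Or.inl rfl⟩
    · refine hhp p hp ?_
      rintro x hx1 hx2 ⟨r, hr, he⟩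
      exact hint x hx1 hx2 ⟨r, Finset.mem_union_right _ hr, he⟩
  · intro p hp hpred
    rw [hmem] at hp
    rcases hp with hp | hp
    · rw [hStmem] at hp
      rcases Nat.lt_or_ge 1 p.1 with hgt | hle
      · exfalso
        refine hpred (Finset.mem_union_left _ ((hStmem _).mpr ?_))
        simp only [Prod.fst, Prod.snd]
        omega
      · -- p = (1, n)
        have hp1 : p.1 = 1 := by omega
        have hp2 : p.2 = n := by omega
        rcases N2 with hsc | ⟨t, hst', hrun⟩
        · refine ⟨c, by omega, fun a ha => ?_⟩
          refine Finset.mem_union_left _ ((hStmem _).mpr ?_)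
          simp only [Prod.fst, Prod.snd]
          omega
        · refine ⟨c + t, by omega, fun a ha => ?_⟩
          rcases Nat.lt_or_ge a c with hac | hac
          · refine Finset.mem_union_left _ ((hStmem _).mpr ?_)
            simp only [Prod.fst, Prod.snd]
            omega
          · have hmem2 := hrun (a - c) (by omega)
            have hb2 := hb _ hmem2
            simp only [Prod.fst, Prod.snd] at hb2
            have e : (p.1 + a, p.2 - a) = (c + 1 + (a - c), c + k - (a - c)) := by
              rw [Prod.ext_iff]; constructor <;> (try simp) <;> omega
            rw [e]
            exact Finset.mem_union_right _ hmem2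
    · obtain ⟨t, hts, hrun⟩ := hst p hp (fun hc' => hpred (Finset.mem_union_right _ hc'))
      exact ⟨t, hts, fun a ha => Finset.mem_union_right _ (hrun a ha)⟩

end Glue

section CardA

lemma cardA0 {s m n : ℕ} :
    ((secFinset s m (n + 1)).filter fun P => ¬Paired P 1).card = secCount s m n := by
  rw [secCount]
  refine Finset.card_bij' (fun P _ => P.image fun p => (p.1 - 1, p.2 - 1))
    (fun Q _ => Q.image fun p => (p.1 + 1, p.2 + 1)) ?_ ?_ ?_ ?_
  · intro P hP
    rw [Finset.mem_filter] at hP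
    obtain ⟨hPS, hnp⟩ := hP
    have hsec := mem_secFinset.mp hPS
    have hb := hsec.1.1
    have h1 : ∀ p ∈ P, 1 < p.1 ∧ p.2 ≤ n + 1 := by
      intro p hp
      have := hb p hp
      have : ¬p.1 = 1 := fun e => hnp ⟨p, hp, Or.inl e⟩
      omega
    have hoff := segmentStruct (lo := 1) (hi := n + 1) hsec
      (fun p hp => Or.inl (h1 p hp))
      (fun _ h2' => by
        have := hb _ h2'
        simp only [Prod.fst, Prod.snd] at this
        omega)
    rw [Finset.filter_true_of_mem (fun p hp => h1 p hp)] at hoff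
    have hzero : n + 1 - 1 = n := by omega
    rw [hzero] at hoff
    have := hoff.shiftDown.toSec
    rw [Nat.zero_add] at this
    exact mem_secFinset.mpr this
  · intro Q hQ
    have hsec := mem_secFinset.mp hQ
    have := (hsec.toOff.shiftUp 1).toSec
    have he : 1 + n = n + 1 := by omega
    rw [he] at this
    rw [Finset.mem_filter]
    refine ⟨mem_secFinset.mpr this, ?_⟩
    rintro ⟨r, hr, he'⟩
    obtain ⟨q, hq, rfl⟩ := Finset.mem_image.mp hr
    have := hsec.1.1 q hq
    simp only [Prod.fst, Prod.snd] at he'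
    omega
  · intro P hP
    rw [Finset.mem_filter] at hP
    obtain ⟨hPS, hnp⟩ := hP
    have hb := (mem_secFinset.mp hPS).1.1
    refine image_sub_add ?_
    intro p hp
    have := hb p hp
    have : ¬p.1 = 1 := fun e => hnp ⟨p, hp, Or.inl e⟩
    omega
  · intro Q _
    exact image_add_sub

lemma dichA {s m n j : ℕ} {P : Finset (ℕ × ℕ)} (hsec : IsSecStruct s m n P)
    (hj : (1, j) ∈ P) : ∀ p ∈ P, p.2 ≤ j ∨ (j < p.1 ∧ p.2 ≤ n) := by
  intro p hp
  have hb := hsec.1.1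
  have hbp := hb p hp
  have hbj := hb _ hj
  simp only [Prod.fst, Prod.snd] at hbj
  by_cases hpe : p = (1, j)
  · rw [hpe]; simp only [Prod.fst, Prod.snd]; omega
  · have hd' := hsec.1.2.1 p hp _ hj hpe
    have hnc' := hsec.1.2.2.1 _ hj p hp
    simp only [Prod.fst, Prod.snd] at hd' hnc'
    omega

lemma cardA1 {s m n j : ℕ} (hjn : j ≤ n) :
    ((secFinset s m n).filter fun P => (1, j) ∈ P).card
      = secCountB s m j * secCount s m (n - j) := by
  rw [secCountB, secCount, ← Finset.card_product]
  refine Finset.card_bij'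
    (fun P _ => ((P.filter fun p => p.2 ≤ j),
                 (P.filter fun p => j < p.1).image fun p => (p.1 - j, p.2 - j)))
    (fun Pq _ => Pq.1 ∪ Pq.2.image fun p => (p.1 + j, p.2 + j)) ?_ ?_ ?_ ?_
  · intro P hP
    rw [Finset.mem_filter] at hP
    obtain ⟨hPS, hPj⟩ := hP
    have hsec := mem_secFinset.mp hPS
    have hb := hsec.1.1
    have hdich := dichA hsec hPj
    rw [Finset.mem_product]
    constructor
    · -- lower part
      have hoff := segmentStruct (lo := 0) (hi := j) hsec
        (fun p hp => by have := hb p hp; have := hdich p hp; omega)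
        (fun _ h2' => by
          have := hb _ h2'
          simp only [Prod.fst, Prod.snd] at this
          omega)
      rw [Nat.sub_zero] at hoff
      rw [Finset.filter_congr (q := fun p => p.2 ≤ j)
        (fun p hp => ⟨fun h => h.2, fun h => ⟨by have := hb p hp; omega, h⟩⟩)] at hoff
      have := hoff.toSec
      rw [Nat.zero_add] at this
      rw [Finset.mem_filter]
      refine ⟨mem_secFinset.mpr this, ?_⟩
      exact Finset.mem_filter.mpr ⟨hPj, by simp⟩
    · -- upper part
      have hoff := segmentStruct (lo := j) (hi := n) hsec
        (fun p hp => by have := hb p hp; have := hdich p hp; omega)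
        (fun _ h2' => by
          have := hb _ h2'
          simp only [Prod.fst, Prod.snd] at this
          omega)
      rw [Finset.filter_congr (q := fun p => j < p.1)
        (fun p hp => ⟨fun h => h.1, fun h => ⟨h, by have := hb p hp; omega⟩⟩)] at hoff
      have := hoff.shiftDown.toSec
      rw [Nat.zero_add] at this
      exact mem_secFinset.mpr this
  · intro Pq hPq
    rw [Finset.mem_product] at hPq
    obtain ⟨hP1, hQ⟩ := hPq
    rw [Finset.mem_filter] at hP1
    obtain ⟨hP1S, hP1j⟩ := hP1
    have hsec1 := mem_secFinset.mp hP1S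
    have hsecQ := mem_secFinset.mp hQ
    have hoff := appendStruct hsec1.toOff (hsecQ.toOff.shiftUp j)
    have he : j + (n - j) = n := by omega
    rw [he] at hoff
    have := hoff.toSec
    rw [Nat.zero_add] at this
    rw [Finset.mem_filter]
    exact ⟨mem_secFinset.mpr this, Finset.mem_union_left _ hP1j⟩
  · intro P hP
    rw [Finset.mem_filter] at hP
    obtain ⟨hPS, hPj⟩ := hP
    have hsec := mem_secFinset.mp hPS
    have hb := hsec.1.1
    have hdich := dichA hsec hPj
    simp only
    rw [image_sub_add (fun p hp => by
      rw [Finset.mem_filter] at hp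
      have := hb p hp.1
      exact ⟨hp.2, by omega⟩)]
    ext p
    simp only [Finset.mem_union, Finset.mem_filter]
    constructor
    · rintro (⟨h, _⟩ | ⟨h, _⟩) <;> exact h
    · intro hp
      rcases hdich p hp with h | h
      · exact Or.inl ⟨hp, h⟩
      · exact Or.inr ⟨hp, h.1⟩
  · intro Pq hPq
    rw [Finset.mem_product] at hPq
    obtain ⟨hP1, hQ⟩ := hPq
    rw [Finset.mem_filter] at hP1
    obtain ⟨hP1S, hP1j⟩ := hP1
    have hb1 := (mem_secFinset.mp hP1S).1.1
    have hbQ := (mem_secFinset.mp hQ).1.1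
    have hup : ∀ p ∈ Pq.2.image fun q : ℕ × ℕ => (q.1 + j, q.2 + j), j < p.1 ∧ j < p.2 := by
      intro p hp
      obtain ⟨q, hq, rfl⟩ := Finset.mem_image.mp hp
      have := hbQ q hq
      simp only [Prod.fst, Prod.snd]
      omega
    have hc1 : (Pq.1 ∪ Pq.2.image fun q : ℕ × ℕ => (q.1 + j, q.2 + j)).filter
        (fun p => p.2 ≤ j) = Pq.1 := by
      ext p
      simp only [Finset.mem_filter, Finset.mem_union]
      constructor
      · rintro ⟨h | h, hle⟩
        · exact h
        · have := hup p h; omega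
      · intro hp
        exact ⟨Or.inl hp, (hb1 p hp).2.2⟩
    have hc2 : (Pq.1 ∪ Pq.2.image fun q : ℕ × ℕ => (q.1 + j, q.2 + j)).filter
        (fun p => j < p.1) = Pq.2.image fun q : ℕ × ℕ => (q.1 + j, q.2 + j) := by
      ext p
      simp only [Finset.mem_filter, Finset.mem_union]
      constructor
      · rintro ⟨h | h, hgt⟩
        · have := hb1 p h; omega
        · exact h
      · intro hp
        exact ⟨Or.inr hp, (hup p hp).1⟩
    rw [Prod.ext_iff]
    constructor
    · simpa using hc1
    · simp only
      rw [hc2, image_add_sub]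

end CardA

section M1

lemma recR {s m n : ℕ} :
    secCount s m (n + 1) = secCount s m n
      + ∑ j ∈ Finset.range (n + 2), secCountB s m j * secCount s m (n + 1 - j) := by
  have hsplit := Finset.card_filter_add_card_filter_not
    (s := secFinset s m (n + 1)) (p := fun P => Paired P 1)
  have hbi : (secFinset s m (n + 1)).filter (fun P => Paired P 1)
      = (Finset.range (n + 2)).biUnion
          (fun j => (secFinset s m (n + 1)).filter fun P => (1, j) ∈ P) := by
    ext P
    simp only [Finset.mem_filter, Finset.mem_biUnion, Finset.mem_range]
    constructor
    · rintro ⟨hPS, p, hp, he⟩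
      have hbp := (mem_secFinset.mp hPS).1.1 p hp
      refine ⟨p.2, by omega, hPS, ?_⟩
      have hp1 : (1, p.2) = p := by
        rw [Prod.ext_iff]; constructor <;> (try simp) <;> omega
      rw [hp1]; exact hp
    · rintro ⟨j, hj, hPS, hmem⟩
      exact ⟨hPS, ⟨(1, j), hmem, Or.inl rfl⟩⟩
  have hdisj : ∀ x ∈ Finset.range (n + 2), ∀ y ∈ Finset.range (n + 2), x ≠ y →
      Disjoint ((secFinset s m (n + 1)).filter fun P => (1, x) ∈ P)
               ((secFinset s m (n + 1)).filter fun P => (1, y) ∈ P) := by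
    intro x _ y _ hxy
    rw [Finset.disjoint_left]
    intro P hPx hPy
    rw [Finset.mem_filter] at hPx hPy
    have hd := (mem_secFinset.mp hPx.1).1.2.1 _ hPx.2 _ hPy.2
      (fun e => hxy (Prod.ext_iff.mp e).2)
    simp only [Prod.fst, Prod.snd] at hd
    omega
  rw [hbi, Finset.card_biUnion hdisj] at hsplit
  have hsum : ∀ j ∈ Finset.range (n + 2),
      ((secFinset s m (n + 1)).filter fun P => (1, j) ∈ P).card
        = secCountB s m j * secCount s m (n + 1 - j) := by
    intro j hj
    rw [Finset.mem_range] at hj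
    exact cardA1 (by omega)
  rw [Finset.sum_congr rfl hsum, cardA0] at hsplit
  simp only [secCount] at hsplit ⊢
  omega

end M1

section M2A

lemma runB {s m n : ℕ} {P : Finset (ℕ × ℕ)} (hsec : IsSecStruct s m n P)
    (h1n : (1, n) ∈ P) : ∀ a < s, (1 + a, n - a) ∈ P := by
  have hb := hsec.1.1
  have hpred : (((1:ℕ), n).1 - 1, ((1:ℕ), n).2 + 1) ∉ P := by
    intro hc
    have := (hb _ hc).1
    simp only [Prod.fst, Prod.snd] at this
    omega
  obtain ⟨t, hts, hr⟩ := hsec.2 (1, n) h1n hpred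
  intro a ha
  exact hr a (by omega)

lemma cardCaseA {s m N : ℕ} (hs : 1 ≤ s) :
    ((secFinset s m (N + 2)).filter fun P => (1, N + 2) ∈ P ∧ (s + 1, N + 2 - s) ∈ P).card
      = secCountB s m N := by
  rw [secCountB]
  refine Finset.card_bij'
    (fun P _ => (P.erase (1, N + 2)).image fun p => (p.1 - 1, p.2 - 1))
    (fun Q _ => insert (1, N + 2) (Q.image fun p => (p.1 + 1, p.2 + 1))) ?_ ?_ ?_ ?_
  · intro P hP
    rw [Finset.mem_filter] at hP
    obtain ⟨hPS, h1n, hsn⟩ := hP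
    have hsec := mem_secFinset.mp hPS
    have hb := hsec.1.1
    have hrun := runB hsec h1n
    have hrun' : ∀ a ≤ s, (1 + a, N + 2 - a) ∈ P := by
      intro a ha
      rcases Nat.lt_or_ge a s with h' | h'
      · exact hrun a h'
      · have hae : a = s := by omega
        have he : ((1:ℕ) + a, N + 2 - a) = (s + 1, N + 2 - s) := by
          rw [Prod.ext_iff]; constructor <;> (try simp) <;> omega
        rw [he]; exact hsn
    have herase : ∀ p ∈ P, p ≠ (1, N + 2) ↔ (1 < p.1 ∧ p.2 ≤ N + 1) := by
      intro p hp
      constructor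
      · intro hne
        have hd := hsec.1.2.1 p hp _ h1n hne
        have := hb p hp
        simp only [Prod.fst, Prod.snd] at hd
        omega
      · intro hlt e
        rw [e] at hlt
        simp only [Prod.fst, Prod.snd] at hlt
        omega
    have heq : P.erase (1, N + 2) = P.filter fun p => 1 < p.1 ∧ p.2 ≤ N + 1 := by
      ext p
      rw [Finset.mem_erase, Finset.mem_filter]
      constructor
      · rintro ⟨hne, hp⟩; exact ⟨hp, (herase p hp).mp hne⟩
      · rintro ⟨hp, hlt⟩; exact ⟨(herase p hp).mpr hlt, hp⟩
    have hoff := segmentStruct (lo := 1) (hi := N + 1) hsec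
      (fun p hp => by
        by_cases hpe : p = (1, N + 2)
        · rw [hpe]; simp only [Prod.fst, Prod.snd]; omega
        · have := (herase p hp).mp hpe; omega)
      (fun _ _ a ha => by
        have := hrun' (a + 1) (by omega)
        have he : ((1:ℕ) + 1 + a, N + 1 - a) = (1 + (a + 1), N + 2 - (a + 1)) := by
          rw [Prod.ext_iff]; constructor <;> (try simp) <;> omega
        rw [he]; exact this)
    rw [show N + 1 - 1 = N from by omega, ← heq] at hoff
    have hfin := hoff.shiftDown.toSec
    rw [Nat.zero_add] at hfin
    rw [Finset.mem_filter]
    refine ⟨mem_secFinset.mpr hfin, ?_⟩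
    refine Finset.mem_image.mpr ⟨(2, N + 1), ?_, ?_⟩
    · rw [Finset.mem_erase]
      have h2 := hrun' 1 hs
      have he : ((1:ℕ) + 1, N + 2 - 1) = (2, N + 1) := by
        rw [Prod.ext_iff]; constructor <;> (try simp) <;> omega
      rw [he] at h2
      refine ⟨?_, h2⟩
      intro e
      have := Prod.ext_iff.mp e
      simp only [Prod.fst, Prod.snd] at this
      omega
    · rw [Prod.ext_iff]; constructor <;> simp
  · intro Q hQ
    rw [Finset.mem_filter] at hQ
    obtain ⟨hQS, hQ1N⟩ := hQ
    have hsecQ := mem_secFinset.mp hQS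
    have hbQ := hsecQ.1.1
    have hrunQ := runB hsecQ hQ1N
    have hoff := nestStruct (c := 1) (k := N) le_rfl (hsecQ.toOff.shiftUp 1)
      (fun he => by
        rw [Finset.image_eq_empty] at he
        rw [he] at hQ1N
        exact absurd hQ1N (Finset.notMem_empty _))
      (by
        right
        have hpredQ : (((1:ℕ), N).1 - 1, ((1:ℕ), N).2 + 1) ∉ Q := by
          intro hc
          have := (hbQ _ hc).1
          simp only [Prod.fst, Prod.snd] at this
          omega
        obtain ⟨t, hts, hr⟩ := hsecQ.2 (1, N) hQ1N hpredQ
        refine ⟨t, by omega, fun b hb' => ?_⟩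
        have hm2 := hr b hb'
        have hbm := hbQ _ hm2
        simp only [Prod.fst, Prod.snd] at hbm hm2
        refine Finset.mem_image.mpr ⟨(1 + b, N - b), hm2, ?_⟩
        rw [Prod.ext_iff]; constructor <;> (try simp) <;> omega)
    have hins : ((Finset.range 1).image fun a => (1 + a, N + 2 * 1 - a)) ∪
        (Q.image fun p => (p.1 + 1, p.2 + 1))
        = insert (1, N + 2) (Q.image fun p => (p.1 + 1, p.2 + 1)) := by
      rw [Finset.range_one, Finset.image_singleton, ← Finset.insert_eq]
      norm_num
    rw [hins] at hoff
    have hfin := hoff.toSec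
    rw [Nat.zero_add, show N + 2 * 1 = N + 2 from by omega] at hfin
    rw [Finset.mem_filter]
    refine ⟨mem_secFinset.mpr hfin, Finset.mem_insert_self _ _, ?_⟩
    rw [Finset.mem_insert]
    right
    have hm2 := hrunQ (s - 1) (by omega)
    have hbm := hbQ _ hm2
    simp only [Prod.fst, Prod.snd] at hbm
    refine Finset.mem_image.mpr ⟨(1 + (s - 1), N - (s - 1)), hm2, ?_⟩
    rw [Prod.ext_iff]; constructor <;> (try simp) <;> omega
  · intro P hP
    rw [Finset.mem_filter] at hP
    obtain ⟨hPS, h1n, _⟩ := hP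
    have hsec := mem_secFinset.mp hPS
    have hb := hsec.1.1
    rw [image_sub_add (fun p hp => by
      rw [Finset.mem_erase] at hp
      have hd := hsec.1.2.1 p hp.2 _ h1n hp.1
      have := hb p hp.2
      simp only [Prod.fst, Prod.snd] at hd
      omega)]
    exact Finset.insert_erase h1n
  · intro Q hQ
    rw [Finset.mem_filter] at hQ
    have hbQ := (mem_secFinset.mp hQ.1).1.1
    rw [Finset.erase_insert (by
      intro hc
      obtain ⟨q, hq, he⟩ := Finset.mem_image.mp hc
      have := hbQ q hq
      have := Prod.ext_iff.mp he
      simp only [Prod.fst, Prod.snd] at this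
      omega)]
    exact image_add_sub

end M2A

section M2B

lemma dichB {s m n : ℕ} (hs : 1 ≤ s) {P : Finset (ℕ × ℕ)} (hsec : IsSecStruct s m n P)
    (h1n : (1, n) ∈ P) (hsn : (s + 1, n - s) ∉ P) :
    ∀ p ∈ P, (s < p.1 ∧ p.2 ≤ n - s) ∨ (p.1 ≤ s ∧ n - s < p.2 ∧ p.1 + p.2 = n + 1) := by
  have h2s := b_lower hs hsec h1n
  have hb := hsec.1.1
  have hd := hsec.1.2.1
  have hrun := runB hsec h1n
  have hlow : ∀ p ∈ P, p.1 ≤ s → p.1 + p.2 = n + 1 := by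
    intro p hp hps
    have hbp := hb p hp
    have hq := hrun (p.1 - 1) (by omega)
    have hbq := hb _ hq
    simp only [Prod.fst, Prod.snd] at hbq
    by_cases hpq : p = (1 + (p.1 - 1), n - (p.1 - 1))
    · have := (Prod.ext_iff.mp hpq).2
      simp only [Prod.snd] at this
      omega
    · have hd' := hd p hp _ hq hpq
      simp only [Prod.fst, Prod.snd] at hd'
      omega
  have hhigh : ∀ p ∈ P, n - s < p.2 → p.1 + p.2 = n + 1 := by
    intro p hp hps
    have hbp := hb p hp
    have hq := hrun (n - p.2) (by omega)
    have hbq := hb _ hq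
    simp only [Prod.fst, Prod.snd] at hbq
    by_cases hpq : p = (1 + (n - p.2), n - (n - p.2))
    · have := (Prod.ext_iff.mp hpq).1
      simp only [Prod.fst] at this
      omega
    · have hd' := hd p hp _ hq hpq
      simp only [Prod.fst, Prod.snd] at hd'
      omega
  intro p hp
  have hbp := hb p hp
  rcases Nat.lt_or_ge s p.1 with h' | h'
  · rcases Nat.lt_or_ge (n - s) p.2 with h'' | h''
    · have := hhigh p hp h''
      omega
    · exact Or.inl ⟨h', h''⟩
  · have := hlow p hp h'
    omega

lemma cardCaseB {s m n : ℕ} (hs : 1 ≤ s) (h2s : 2 * s ≤ n) :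
    ((secFinset s m n).filter fun P => (1, n) ∈ P ∧ (s + 1, n - s) ∉ P).card
      = ((secFinset s m (n - 2 * s)).filter fun Q =>
          (1, n - 2 * s) ∉ Q ∧ (Q ≠ ∅ ∨ m ≤ n - 2 * s)).card := by
  refine Finset.card_bij'
    (fun P _ => (P.filter fun p => s < p.1).image fun p => (p.1 - s, p.2 - s))
    (fun Q _ => ((Finset.range s).image fun a => (1 + a, n - a)) ∪
                (Q.image fun p => (p.1 + s, p.2 + s))) ?_ ?_ ?_ ?_
  · intro P hP
    rw [Finset.mem_filter] at hP
    obtain ⟨hPS, h1n, hsn⟩ := hP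
    have hsec := mem_secFinset.mp hPS
    have hb := hsec.1.1
    have hrun := runB hsec h1n
    have hdich := dichB hs hsec h1n hsn
    have hoff := segmentStruct (lo := s) (hi := n - s) hsec
      (fun p hp => by have := hb p hp; have := hdich p hp; omega)
      (fun h' _ _ _ => absurd h' hsn)
    rw [show n - s - s = n - 2 * s from by omega] at hoff
    rw [Finset.filter_congr (q := fun p => s < p.1)
      (fun p hp => ⟨fun h => h.1, fun h => ⟨h, by have := hdich p hp; omega⟩⟩)] at hoff
    have hfin := hoff.shiftDown.toSec
    rw [Nat.zero_add] at hfin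
    rw [Finset.mem_filter]
    refine ⟨mem_secFinset.mpr hfin, ?_, ?_⟩
    · intro hc
      obtain ⟨q, hq, he⟩ := Finset.mem_image.mp hc
      rw [Finset.mem_filter] at hq
      have := hb q hq.1
      have he' := Prod.ext_iff.mp he
      simp only [Prod.fst, Prod.snd] at he'
      have hqe : q = (s + 1, n - s) := by
        rw [Prod.ext_iff]; constructor <;> (try simp) <;> omega
      exact hsn (hqe ▸ hq.1)
    · by_cases hQe : ((P.filter fun p => s < p.1).image fun p => (p.1 - s, p.2 - s)) = ∅
      · right
        have hall : ∀ p ∈ P, ¬s < p.1 := by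
          intro p hp hc
          rw [Finset.image_eq_empty, Finset.filter_eq_empty_iff] at hQe
          exact hQe hp hc
        have hp0 := hrun (s - 1) (by omega)
        have hbp0 := hb _ hp0
        simp only [Prod.fst, Prod.snd] at hbp0
        have hres := hsec.1.2.2.2 _ hp0 (by
          rintro x hx1 hx2 ⟨r, hr, he⟩
          simp only [Prod.fst, Prod.snd] at hx1 hx2
          have hbr := hb r hr
          have hallr := hall r hr
          rcases hdich r hr with h' | h' <;> omega)
        simp only [Prod.fst, Prod.snd] at hres
        omega
      · exact Or.inl hQe
  · intro Q hQ
    rw [Finset.mem_filter] at hQ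
    obtain ⟨hQS, h1k, hne⟩ := hQ
    have hsecQ := mem_secFinset.mp hQS
    have hbQ := hsecQ.1.1
    have hoff := nestStruct (c := s) (k := n - 2 * s) hs (hsecQ.toOff.shiftUp s)
      (fun he => by
        rw [Finset.image_eq_empty] at he
        rcases hne with h' | h'
        · exact absurd he h'
        · exact h')
      (Or.inl le_rfl)
    rw [show n - 2 * s + 2 * s = n from by omega] at hoff
    have hfin := hoff.toSec
    rw [Nat.zero_add] at hfin
    rw [Finset.mem_filter]
    refine ⟨mem_secFinset.mpr hfin, ?_, ?_⟩
    · refine Finset.mem_union_left _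
        (Finset.mem_image.mpr ⟨0, Finset.mem_range.mpr (by omega), ?_⟩)
      rw [Prod.ext_iff]; constructor <;> (try simp)
    · intro hc
      rcases Finset.mem_union.mp hc with h' | h'
      · obtain ⟨a, ha, he⟩ := Finset.mem_image.mp h'
        rw [Finset.mem_range] at ha
        have he' := Prod.ext_iff.mp he
        simp only [Prod.fst, Prod.snd] at he'
        omega
      · obtain ⟨q, hq, he⟩ := Finset.mem_image.mp h'
        have := hbQ q hq
        have he' := Prod.ext_iff.mp he
        simp only [Prod.fst, Prod.snd] at he'
        have hqe : q = (1, n - 2 * s) := by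
          rw [Prod.ext_iff]; constructor <;> (try simp) <;> omega
        exact h1k (hqe ▸ hq)
  · intro P hP
    rw [Finset.mem_filter] at hP
    obtain ⟨hPS, h1n, hsn⟩ := hP
    have hsec := mem_secFinset.mp hPS
    have hb := hsec.1.1
    have hrun := runB hsec h1n
    have hdich := dichB hs hsec h1n hsn
    rw [image_sub_add (fun p hp => by
      rw [Finset.mem_filter] at hp
      have := hb p hp.1
      exact ⟨hp.2, by omega⟩)]
    ext p
    simp only [Finset.mem_union, Finset.mem_filter, Finset.mem_image, Finset.mem_range]
    constructor
    · rintro (⟨a, ha, rfl⟩ | ⟨h, _⟩)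
      · exact hrun a ha
      · exact h
    · intro hp
      have hbp := hb p hp
      rcases hdich p hp with h' | h'
      · exact Or.inr ⟨hp, h'.1⟩
      · refine Or.inl ⟨p.1 - 1, by omega, ?_⟩
        rw [Prod.ext_iff]; constructor <;> (try simp) <;> omega
  · intro Q hQ
    rw [Finset.mem_filter] at hQ
    have hbQ := (mem_secFinset.mp hQ.1).1.1
    have hfe : ((((Finset.range s).image fun a => (1 + a, n - a)) ∪
        (Q.image fun p => (p.1 + s, p.2 + s))).filter fun p => s < p.1)
        = Q.image fun p => (p.1 + s, p.2 + s) := by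
      ext p
      simp only [Finset.mem_filter, Finset.mem_union, Finset.mem_image, Finset.mem_range]
      constructor
      · rintro ⟨⟨a, ha, rfl⟩ | h, hgt⟩
        · exfalso
          simp only [Prod.fst] at hgt
          omega
        · exact h
      · rintro ⟨q, hq, rfl⟩
        have := hbQ q hq
        exact ⟨Or.inr ⟨q, hq, rfl⟩, by simp only [Prod.fst]; omega⟩
    rw [hfe, image_add_sub]

lemma recB {s m n : ℕ} (hs : 1 ≤ s) (hm : 1 ≤ m) (h2s : 2 * s ≤ n) :
    secCountB s m n + secCountB s m (n - 2 * s) + (if n - 2 * s < m then 1 else 0)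
      = secCountB s m (n - 2) + secCount s m (n - 2 * s) := by
  have hBsplit : secCountB s m n
      = ((secFinset s m n).filter fun P => (1, n) ∈ P ∧ (s + 1, n - s) ∈ P).card
        + ((secFinset s m n).filter fun P => (1, n) ∈ P ∧ (s + 1, n - s) ∉ P).card := by
    rw [secCountB,
      ← Finset.card_filter_add_card_filter_not (p := fun P => (s + 1, n - s) ∈ P)
        (s := (secFinset s m n).filter fun P => (1, n) ∈ P),
      Finset.filter_filter, Finset.filter_filter]
  have hA : ((secFinset s m n).filter fun P => (1, n) ∈ P ∧ (s + 1, n - s) ∈ P).card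
      = secCountB s m (n - 2) := by
    have h := cardCaseA (s := s) (m := m) (N := n - 2) hs
    rw [show n - 2 + 2 = n from by omega] at h
    exact h
  have hC := cardCaseB (m := m) hs h2s
  set k := n - 2 * s with hk
  have hD : ((secFinset s m k).filter fun Q => (1, k) ∉ Q ∧ (Q ≠ ∅ ∨ m ≤ k)).card
      + secCountB s m k + (if k < m then 1 else 0) = secCount s m k := by
    by_cases hkm : m ≤ k
    · rw [if_neg (by omega)]
      rw [Finset.filter_congr (q := fun Q => (1, k) ∉ Q)
        (fun Q _ => ⟨fun h => h.1, fun h => ⟨h, Or.inr hkm⟩⟩)]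
      have := Finset.card_filter_add_card_filter_not
        (s := secFinset s m k) (p := fun Q => (1, k) ∈ Q)
      rw [secCountB, secCount]
      omega
    · rw [if_pos (by omega)]
      rw [secFinset_small (by omega), secCountB_small (by omega), secCount_small (by omega)]
      rw [Finset.filter_singleton]
      rw [if_neg (by simp; omega)]
      simp
  omega

end M2B

section PS

lemma coeff_Tmgf {m d : ℕ} : (PowerSeries.coeff d) (Tmgf m) = if d < m then 1 else 0 := by
  rw [Tmgf, map_sum]
  simp only [PowerSeries.coeff_X_pow]
  rw [Finset.sum_ite_eq (Finset.range m) d (fun _ => (1 : ℚ))]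
  simp [Finset.mem_range]

lemma hR (s m : ℕ) (hm : 1 ≤ m) :
    Rgf s m = 1 + PowerSeries.X ^ 1 * Rgf s m + Bgf s m * Rgf s m := by
  ext n
  rw [map_add, map_add, PowerSeries.coeff_X_pow_mul', PowerSeries.coeff_mul,
    PowerSeries.coeff_one, Finset.Nat.sum_antidiagonal_eq_sum_range_succ_mk]
  simp only [Rgf, Bgf, PowerSeries.coeff_mk]
  cases n with
  | zero =>
    rw [if_pos rfl, if_neg (by omega)]
    rw [secCount_small (show 0 < m + 2 from by omega)]
    simp [secCountB_small (show 0 < m + 2 from by omega)]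
  | succ n =>
    rw [if_neg (by omega), if_pos (by omega)]
    rw [show n + 1 - 1 = n from by omega]
    rw [recR (s := s) (m := m) (n := n)]
    push_cast
    ring

lemma hB (s m : ℕ) (hs : 1 ≤ s) (hm : 1 ≤ m) :
    Bgf s m + PowerSeries.X ^ (2 * s) * Bgf s m + PowerSeries.X ^ (2 * s) * Tmgf m
      = PowerSeries.X ^ 2 * Bgf s m + PowerSeries.X ^ (2 * s) * Rgf s m := by
  ext n
  rw [map_add, map_add, map_add, PowerSeries.coeff_X_pow_mul', PowerSeries.coeff_X_pow_mul',
    PowerSeries.coeff_X_pow_mul', PowerSeries.coeff_X_pow_mul', coeff_Tmgf]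
  simp only [Rgf, Bgf, PowerSeries.coeff_mk]
  by_cases h2s : 2 * s ≤ n
  · rw [if_pos h2s, if_pos h2s, if_pos h2s, if_pos (show 2 ≤ n from by omega)]
    have hq := congrArg (Nat.cast : ℕ → ℚ) (recB (s := s) (m := m) (n := n) hs hm h2s)
    push_cast at hq
    exact hq
  · rw [if_neg h2s, if_neg h2s, if_neg h2s]
    rw [secCountB_zero_of_lt hs (by omega)]
    by_cases h2 : 2 ≤ n
    · rw [if_pos h2, secCountB_zero_of_lt hs (by omega)]
      norm_num
    · rw [if_neg h2]
      norm_num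

end PS

theorem stmt1 (s m : ℕ) (hs : 1 ≤ s) (hm : 1 ≤ m) :
    Rgf s m * (1 - PowerSeries.X - Bgf s m) = 1 ∧
    (1 - PowerSeries.X ^ 2) * Bgf s m
      = PowerSeries.X ^ (2 * s) * (Rgf s m - Bgf s m - Tmgf m) := by
  constructor
  · linear_combination (hR s m hm)
  · linear_combination (hB s m hs hm)
end

section
/- In ℚ[[z]] the generating function R satisfies the quadratic equation z^{2s}·R(z)² − [(1−z)(1−z²+z^{2s}) + z^{2s}T_m(z)]·R(z) + (1 − z² + z^{2s}) = 0. -/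
open scoped Classical

namespace SecProof

open Finset

lemma mem_secFinset {s m n : ℕ} {P : Finset (ℕ × ℕ)} :
    P ∈ secFinset s m n ↔ IsSecStruct s m n P := by
  simp only [secFinset, Finset.mem_filter, Finset.mem_powerset, and_iff_right_iff_imp]
  intro h p hp
  obtain ⟨h1, h2, h3⟩ := h.1.1 p hp
  simp only [Finset.mem_product, Finset.mem_range]
  omega

/-- window version of being a secondary structure: all coordinates in `[a+1, a+n]`. -/
def WSec (s m a n : ℕ) (P : Finset (ℕ × ℕ)) : Prop :=
  (∀ p ∈ P, a + 1 ≤ p.1 ∧ p.1 < p.2 ∧ p.2 ≤ a + n) ∧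
  (∀ p ∈ P, ∀ q ∈ P, p ≠ q → p.1 ≠ q.1 ∧ p.1 ≠ q.2 ∧ p.2 ≠ q.1 ∧ p.2 ≠ q.2) ∧
  (∀ p ∈ P, ∀ q ∈ P, ¬(p.1 < q.1 ∧ q.1 < p.2 ∧ p.2 < q.2)) ∧
  (∀ p ∈ P, (∀ x, p.1 < x → x < p.2 → ¬Paired P x) → m ≤ p.2 - p.1 - 1) ∧
  StackCond s P

lemma isSecStruct_iff_wsec {s m n : ℕ} {P : Finset (ℕ × ℕ)} :
    IsSecStruct s m n P ↔ WSec s m 0 n P := by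
  unfold IsSecStruct SecBase WSec
  simp only [Nat.zero_add, zero_add]
  tauto

def shUp (k : ℕ) (Q : Finset (ℕ × ℕ)) : Finset (ℕ × ℕ) := Q.image fun p => (p.1 + k, p.2 + k)
def shDown (k : ℕ) (Q : Finset (ℕ × ℕ)) : Finset (ℕ × ℕ) := Q.image fun p => (p.1 - k, p.2 - k)

lemma mem_shUp {k : ℕ} {Q : Finset (ℕ × ℕ)} {x : ℕ × ℕ} :
    x ∈ shUp k Q ↔ ∃ q ∈ Q, q.1 + k = x.1 ∧ q.2 + k = x.2 := by
  simp [shUp, Prod.ext_iff]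

lemma mem_shDown {k : ℕ} {Q : Finset (ℕ × ℕ)} {x : ℕ × ℕ} :
    x ∈ shDown k Q ↔ ∃ q ∈ Q, q.1 - k = x.1 ∧ q.2 - k = x.2 := by
  simp [shDown, Prod.ext_iff]

lemma shDown_shUp (k : ℕ) (Q : Finset (ℕ × ℕ)) : shDown k (shUp k Q) = Q := by
  unfold shDown shUp
  rw [Finset.image_image]
  have : ((fun p : ℕ × ℕ => (p.1 - k, p.2 - k)) ∘ fun p : ℕ × ℕ => (p.1 + k, p.2 + k)) = id := by
    funext p; simp
  rw [this, Finset.image_id]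

lemma shUp_shDown {k : ℕ} {P : Finset (ℕ × ℕ)} (h : ∀ p ∈ P, k ≤ p.1 ∧ k ≤ p.2) :
    shUp k (shDown k P) = P := by
  unfold shDown shUp
  rw [Finset.image_image]
  ext x
  simp only [Finset.mem_image, Function.comp_apply]
  constructor
  · rintro ⟨p, hp, rfl⟩
    obtain ⟨h1, h2⟩ := h p hp
    have : (p.1 - k + k, p.2 - k + k) = p := by
      ext <;> simp <;> omega
    rw [this]; exact hp
  · intro hx
    refine ⟨x, hx, ?_⟩
    obtain ⟨h1, h2⟩ := h x hx
    ext <;> simp <;> omega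

lemma paired_union {P₁ P₂ : Finset (ℕ × ℕ)} {x : ℕ} :
    Paired (P₁ ∪ P₂) x ↔ Paired P₁ x ∨ Paired P₂ x := by
  unfold Paired
  constructor
  · rintro ⟨p, hp, hx⟩
    rcases Finset.mem_union.mp hp with h | h
    · exact Or.inl ⟨p, h, hx⟩
    · exact Or.inr ⟨p, h, hx⟩
  · rintro (⟨p, hp, hx⟩ | ⟨p, hp, hx⟩)
    · exact ⟨p, Finset.mem_union_left _ hp, hx⟩
    · exact ⟨p, Finset.mem_union_right _ hp, hx⟩

lemma wsec_shUp {s m n a : ℕ} {Q : Finset (ℕ × ℕ)} (h : IsSecStruct s m n Q) :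
    WSec s m a n (shUp a Q) := by
  obtain ⟨⟨hb, hd, hnc, hh⟩, hst⟩ := h
  refine ⟨?_, ?_, ?_, ?_, ?_⟩
  · rintro p hp
    obtain ⟨q, hq, e1, e2⟩ := mem_shUp.mp hp
    obtain ⟨g1, g2, g3⟩ := hb q hq
    omega
  · rintro p hp q hq hne
    obtain ⟨p', hp', e1, e2⟩ := mem_shUp.mp hp
    obtain ⟨q', hq', f1, f2⟩ := mem_shUp.mp hq
    have hne' : p' ≠ q' := by
      rintro rfl
      apply hne
      ext <;> omega
    have := hd p' hp' q' hq' hne'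
    omega
  · rintro p hp q hq hc
    obtain ⟨p', hp', e1, e2⟩ := mem_shUp.mp hp
    obtain ⟨q', hq', f1, f2⟩ := mem_shUp.mp hq
    exact hnc p' hp' q' hq' (by omega)
  · rintro p hp hun
    obtain ⟨q, hq, e1, e2⟩ := mem_shUp.mp hp
    obtain ⟨g1, g2, g3⟩ := hb q hq
    have : m ≤ q.2 - q.1 - 1 := by
      apply hh q hq
      intro x hx1 hx2 hpx
      obtain ⟨w, hw, hwx⟩ := hpx
      apply hun (x + a) (by omega) (by omega)
      exact ⟨(w.1 + a, w.2 + a), mem_shUp.mpr ⟨w, hw, rfl, rfl⟩, by simp; omega⟩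
    omega
  · rintro p hp hnot
    obtain ⟨q, hq, e1, e2⟩ := mem_shUp.mp hp
    obtain ⟨g1, g2, g3⟩ := hb q hq
    have hq' : (q.1 - 1, q.2 + 1) ∉ Q := by
      intro hmem
      obtain ⟨w1, _, _⟩ := hb _ hmem
      simp only at w1
      apply hnot
      apply mem_shUp.mpr
      exact ⟨(q.1 - 1, q.2 + 1), hmem, by simp; omega, by simp; omega⟩
    obtain ⟨t, ht, hrun⟩ := hst q hq hq'
    refine ⟨t, ht, fun i hi => ?_⟩
    have hm := hrun i hi
    obtain ⟨w1, w2, w3⟩ := hb _ hm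
    apply mem_shUp.mpr
    exact ⟨(q.1 + i, q.2 - i), hm, by simp; omega, by simp; omega⟩

lemma isSec_shDown {s m n a : ℕ} {P : Finset (ℕ × ℕ)} (h : WSec s m a n P) :
    IsSecStruct s m n (shDown a P) := by
  obtain ⟨hb, hd, hnc, hh, hst⟩ := h
  refine ⟨⟨?_, ?_, ?_, ?_⟩, ?_⟩
  · rintro p hp
    obtain ⟨q, hq, e1, e2⟩ := mem_shDown.mp hp
    obtain ⟨g1, g2, g3⟩ := hb q hq
    omega
  · rintro p hp q hq hne
    obtain ⟨p', hp', e1, e2⟩ := mem_shDown.mp hp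
    obtain ⟨q', hq', f1, f2⟩ := mem_shDown.mp hq
    obtain ⟨g1, g2, g3⟩ := hb p' hp'
    obtain ⟨k1, k2, k3⟩ := hb q' hq'
    have hne' : p' ≠ q' := by
      rintro rfl
      apply hne
      ext <;> omega
    have := hd p' hp' q' hq' hne'
    omega
  · rintro p hp q hq hc
    obtain ⟨p', hp', e1, e2⟩ := mem_shDown.mp hp
    obtain ⟨q', hq', f1, f2⟩ := mem_shDown.mp hq
    obtain ⟨g1, g2, g3⟩ := hb p' hp'
    obtain ⟨k1, k2, k3⟩ := hb q' hq'
    exact hnc p' hp' q' hq' (by omega)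
  · rintro p hp hun
    obtain ⟨q, hq, e1, e2⟩ := mem_shDown.mp hp
    obtain ⟨g1, g2, g3⟩ := hb q hq
    have : m ≤ q.2 - q.1 - 1 := by
      apply hh q hq
      intro x hx1 hx2 hpx
      obtain ⟨w, hw, hwx⟩ := hpx
      obtain ⟨w1, w2, w3⟩ := hb w hw
      apply hun (x - a) (by omega) (by omega)
      refine ⟨(w.1 - a, w.2 - a), mem_shDown.mpr ⟨w, hw, rfl, rfl⟩, by simp; omega⟩
    omega
  · rintro p hp hnot
    obtain ⟨q, hq, e1, e2⟩ := mem_shDown.mp hp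
    obtain ⟨g1, g2, g3⟩ := hb q hq
    have hq' : (q.1 - 1, q.2 + 1) ∉ P := by
      intro hmem
      obtain ⟨w1, _, _⟩ := hb _ hmem
      simp only at w1
      apply hnot
      apply mem_shDown.mpr
      exact ⟨(q.1 - 1, q.2 + 1), hmem, by simp; omega, by simp; omega⟩
    obtain ⟨t, ht, hrun⟩ := hst q hq hq'
    refine ⟨t, ht, fun i hi => ?_⟩
    have hm := hrun i hi
    obtain ⟨w1, w2, w3⟩ := hb _ hm
    apply mem_shDown.mpr
    exact ⟨(q.1 + i, q.2 - i), hm, by simp; omega, by simp; omega⟩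

end SecProof

namespace SecProof
open Finset

lemma union_sec {s m a b : ℕ} {P₁ P₂ : Finset (ℕ × ℕ)}
    (h₁ : ∀ p ∈ P₁, 1 ≤ p.1 ∧ p.1 < p.2 ∧ p.2 ≤ a)
    (h₂ : ∀ p ∈ P₂, a + 1 ≤ p.1 ∧ p.1 < p.2 ∧ p.2 ≤ a + b) :
    IsSecStruct s m (a + b) (P₁ ∪ P₂) ↔ IsSecStruct s m a P₁ ∧ WSec s m a b P₂ := by
  constructor
  · rintro ⟨⟨hb, hd, hnc, hh⟩, hst⟩
    constructor
    · refine ⟨⟨h₁, ?_, ?_, ?_⟩, ?_⟩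
      · intro p hp q hq hne
        exact hd p (mem_union_left _ hp) q (mem_union_left _ hq) hne
      · intro p hp q hq
        exact hnc p (mem_union_left _ hp) q (mem_union_left _ hq)
      · intro p hp hun
        apply hh p (mem_union_left _ hp)
        intro x hx1 hx2 hpx
        rcases paired_union.mp hpx with h | h
        · exact hun x hx1 hx2 h
        · obtain ⟨q, hq, hqx⟩ := h
          obtain ⟨g1, g2, g3⟩ := h₂ q hq
          obtain ⟨k1, k2, k3⟩ := h₁ p hp
          omega
      · intro p hp hnot
        have hnot' : (p.1 - 1, p.2 + 1) ∉ P₁ ∪ P₂ := by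
          intro hmem
          rcases mem_union.mp hmem with h | h
          · exact hnot h
          · obtain ⟨g1, g2, g3⟩ := h₂ _ h
            obtain ⟨k1, k2, k3⟩ := h₁ p hp
            simp only at g1 g2 g3
            omega
        obtain ⟨t, ht, hrun⟩ := hst p (mem_union_left _ hp) hnot'
        refine ⟨t, ht, fun i hi => ?_⟩
        have hm := hrun i hi
        rcases mem_union.mp hm with h | h
        · exact h
        · obtain ⟨g1, g2, g3⟩ := h₂ _ h
          obtain ⟨k1, k2, k3⟩ := h₁ p hp
          simp only at g1 g2 g3
          omega
    · refine ⟨h₂, ?_, ?_, ?_, ?_⟩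
      · intro p hp q hq hne
        exact hd p (mem_union_right _ hp) q (mem_union_right _ hq) hne
      · intro p hp q hq
        exact hnc p (mem_union_right _ hp) q (mem_union_right _ hq)
      · intro p hp hun
        apply hh p (mem_union_right _ hp)
        intro x hx1 hx2 hpx
        rcases paired_union.mp hpx with h | h
        · obtain ⟨q, hq, hqx⟩ := h
          obtain ⟨g1, g2, g3⟩ := h₁ q hq
          obtain ⟨k1, k2, k3⟩ := h₂ p hp
          omega
        · exact hun x hx1 hx2 h
      · intro p hp hnot
        have hnot' : (p.1 - 1, p.2 + 1) ∉ P₁ ∪ P₂ := by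
          intro hmem
          rcases mem_union.mp hmem with h | h
          · obtain ⟨g1, g2, g3⟩ := h₁ _ h
            obtain ⟨k1, k2, k3⟩ := h₂ p hp
            simp only at g1 g2 g3
            omega
          · exact hnot h
        obtain ⟨t, ht, hrun⟩ := hst p (mem_union_right _ hp) hnot'
        refine ⟨t, ht, fun i hi => ?_⟩
        have hm := hrun i hi
        rcases mem_union.mp hm with h | h
        · obtain ⟨g1, g2, g3⟩ := h₁ _ h
          obtain ⟨k1, k2, k3⟩ := h₂ p hp
          simp only at g1 g2 g3
          omega
        · exact h
  · rintro ⟨⟨⟨hb1, hd1, hnc1, hh1⟩, hst1⟩, hb2, hd2, hnc2, hh2, hst2⟩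
    refine ⟨⟨?_, ?_, ?_, ?_⟩, ?_⟩
    · intro p hp
      rcases mem_union.mp hp with h | h
      · have := h₁ p h; omega
      · have := h₂ p h; omega
    · intro p hp q hq hne
      rcases mem_union.mp hp with h | h <;> rcases mem_union.mp hq with g | g
      · exact hd1 p h q g hne
      · have := h₁ p h; have := h₂ q g; omega
      · have := h₁ q g; have := h₂ p h; omega
      · exact hd2 p h q g hne
    · intro p hp q hq
      rcases mem_union.mp hp with h | h <;> rcases mem_union.mp hq with g | g
      · exact hnc1 p h q g
      · have := h₁ p h; have := h₂ q g; omega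
      · have := h₁ q g; have := h₂ p h; omega
      · exact hnc2 p h q g
    · intro p hp hun
      rcases mem_union.mp hp with h | h
      · apply hh1 p h
        intro x hx1 hx2 hpx
        exact hun x hx1 hx2 (paired_union.mpr (Or.inl hpx))
      · apply hh2 p h
        intro x hx1 hx2 hpx
        exact hun x hx1 hx2 (paired_union.mpr (Or.inr hpx))
    · intro p hp hnot
      rcases mem_union.mp hp with h | h
      · obtain ⟨t, ht, hrun⟩ := hst1 p h (fun hx => hnot (mem_union_left _ hx))
        exact ⟨t, ht, fun i hi => mem_union_left _ (hrun i hi)⟩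
      · obtain ⟨t, ht, hrun⟩ := hst2 p h (fun hx => hnot (mem_union_right _ hx))
        exact ⟨t, ht, fun i hi => mem_union_right _ (hrun i hi)⟩

end SecProof

namespace SecProof
open Finset

def stackF (t n : ℕ) : Finset (ℕ × ℕ) := (Finset.range t).image fun a => (a + 1, n - a)

lemma mem_stackF {t n : ℕ} {x : ℕ × ℕ} :
    x ∈ stackF t n ↔ ∃ a, a < t ∧ x.1 = a + 1 ∧ x.2 = n - a := by
  constructor
  · intro h
    obtain ⟨a, ha, heq⟩ := Finset.mem_image.mp h
    exact ⟨a, Finset.mem_range.mp ha, by rw [← heq], by rw [← heq]⟩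
  · rintro ⟨a, ha, e1, e2⟩
    exact Finset.mem_image.mpr ⟨a, Finset.mem_range.mpr ha,
      (Prod.ext_iff.mpr ⟨e1.symm, e2.symm⟩)⟩

lemma nest_sec {s m t n : ℕ} {P₂ : Finset (ℕ × ℕ)}
    (ht : 1 ≤ t) (htn : 2 * t ≤ n)
    (h₂ : ∀ p ∈ P₂, t + 1 ≤ p.1 ∧ p.1 < p.2 ∧ p.2 ≤ n - t)
    (hni : (t + 1, n - t) ∉ P₂) :
    IsSecStruct s m n (stackF t n ∪ P₂) ↔
      (s ≤ t ∧ (P₂ = ∅ → m ≤ n - 2 * t) ∧ WSec s m t (n - 2 * t) P₂) := by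
  constructor
  · rintro ⟨⟨hb, hd, hnc, hh⟩, hst⟩
    have h1n : (1, n) ∈ stackF t n := mem_stackF.mpr ⟨0, ht, by simp, by simp⟩
    refine ⟨?_, ?_, ?_, ?_, ?_, ?_, ?_⟩
    · -- s ≤ t
      have h0 : (((1:ℕ), n).1 - 1, ((1:ℕ), n).2 + 1) ∉ stackF t n ∪ P₂ := by
        intro hmem
        have := hb _ hmem
        simp only at this
        omega
      obtain ⟨t', ht', hrun⟩ := hst (1, n) (mem_union_left _ h1n) h0
      have htt : t' ≤ t := by
        by_contra hc
        have hm := hrun t (by omega)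
        rcases mem_union.mp hm with h | h
        · obtain ⟨a, ha, e1, e2⟩ := mem_stackF.mp h
          simp only at e1 e2
          omega
        · apply hni
          have : ((1:ℕ) + t, n - t) = (t + 1, n - t) := by rw [Nat.add_comm]
          rwa [← this]
      omega
    · -- hairpin if empty
      intro hemp
      have hpin : ((t : ℕ), n - t + 1) ∈ stackF t n :=
        mem_stackF.mpr ⟨t - 1, by omega, by simp; omega, by simp; omega⟩
      have := hh (t, n - t + 1) (mem_union_left _ hpin) ?_
      · simp only at this
        omega
      · intro x hx1 hx2 hpx
        simp only at hx1 hx2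
        obtain ⟨q, hq, hqx⟩ := hpx
        rcases mem_union.mp hq with h | h
        · obtain ⟨a, ha, e1, e2⟩ := mem_stackF.mp h
          omega
        · rw [hemp] at h
          exact absurd h (Finset.notMem_empty q)
    · intro p hp
      have := h₂ p hp
      omega
    · intro p hp q hq hne
      exact hd p (mem_union_right _ hp) q (mem_union_right _ hq) hne
    · intro p hp q hq
      exact hnc p (mem_union_right _ hp) q (mem_union_right _ hq)
    · intro p hp hun
      apply hh p (mem_union_right _ hp)
      intro x hx1 hx2 hpx
      obtain ⟨q, hq, hqx⟩ := hpx
      rcases mem_union.mp hq with h | h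
      · obtain ⟨a, ha, e1, e2⟩ := mem_stackF.mp h
        obtain ⟨g1, g2, g3⟩ := h₂ p hp
        omega
      · exact hun x hx1 hx2 ⟨q, h, hqx⟩
    · intro p hp hnot
      have hnot' : (p.1 - 1, p.2 + 1) ∉ stackF t n ∪ P₂ := by
        intro hmem
        rcases mem_union.mp hmem with h | h
        · obtain ⟨a, ha, e1, e2⟩ := mem_stackF.mp h
          simp only at e1 e2
          obtain ⟨g1, g2, g3⟩ := h₂ p hp
          apply hni
          have hp1 : p.1 = t + 1 := by omega
          have hp2 : p.2 = n - t := by omega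
          rw [← hp1, ← hp2]
          exact hp
        · exact hnot h
      obtain ⟨t', ht', hrun⟩ := hst p (mem_union_right _ hp) hnot'
      refine ⟨t', ht', fun i hi => ?_⟩
      have hm := hrun i hi
      rcases mem_union.mp hm with h | h
      · obtain ⟨a, ha, e1, e2⟩ := mem_stackF.mp h
        simp only at e1 e2
        obtain ⟨g1, g2, g3⟩ := h₂ p hp
        omega
      · exact h
  · rintro ⟨hsle, hhe, hb2, hd2, hnc2, hh2, hst2⟩
    refine ⟨⟨?_, ?_, ?_, ?_⟩, ?_⟩
    · intro p hp
      rcases mem_union.mp hp with h | h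
      · obtain ⟨a, ha, e1, e2⟩ := mem_stackF.mp h
        omega
      · have := h₂ p h
        omega
    · intro p hp q hq hne
      rcases mem_union.mp hp with h | h <;> rcases mem_union.mp hq with g | g
      · obtain ⟨a, ha, e1, e2⟩ := mem_stackF.mp h
        obtain ⟨a', ha', f1, f2⟩ := mem_stackF.mp g
        have haa : a ≠ a' := by
          rintro rfl
          exact hne (Prod.ext_iff.mpr ⟨by omega, by omega⟩)
        omega
      · obtain ⟨a, ha, e1, e2⟩ := mem_stackF.mp h
        have := h₂ q g
        omega
      · obtain ⟨a, ha, e1, e2⟩ := mem_stackF.mp g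
        have := h₂ p h
        omega
      · exact hd2 p h q g hne
    · intro p hp q hq
      rcases mem_union.mp hp with h | h <;> rcases mem_union.mp hq with g | g
      · obtain ⟨a, ha, e1, e2⟩ := mem_stackF.mp h
        obtain ⟨a', ha', f1, f2⟩ := mem_stackF.mp g
        omega
      · obtain ⟨a, ha, e1, e2⟩ := mem_stackF.mp h
        have := h₂ q g
        omega
      · obtain ⟨a, ha, e1, e2⟩ := mem_stackF.mp g
        have := h₂ p h
        omega
      · exact hnc2 p h q g
    · intro p hp hun
      rcases mem_union.mp hp with h | h
      · obtain ⟨a, ha, e1, e2⟩ := mem_stackF.mp h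
        by_cases hat : a + 1 < t
        · exfalso
          apply hun (a + 2) (by omega) (by omega)
          exact ⟨(a + 2, n - (a + 1)), mem_union_left _
            (mem_stackF.mpr ⟨a + 1, hat, by simp, by simp⟩), Or.inl rfl⟩
        · -- a = t - 1, innermost
          rcases Finset.eq_empty_or_nonempty P₂ with hemp | ⟨q, hq⟩
          · have := hhe hemp
            omega
          · exfalso
            obtain ⟨g1, g2, g3⟩ := h₂ q hq
            apply hun q.1 (by omega) (by omega)
            exact ⟨q, mem_union_right _ hq, Or.inl rfl⟩
      · apply hh2 p h
        intro x hx1 hx2 hpx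
        obtain ⟨q, hq, hqx⟩ := hpx
        exact hun x hx1 hx2 ⟨q, mem_union_right _ hq, hqx⟩
    · intro p hp hnot
      rcases mem_union.mp hp with h | h
      · obtain ⟨a, ha, e1, e2⟩ := mem_stackF.mp h
        rcases Nat.eq_zero_or_pos a with rfl | hapos
        · refine ⟨t, hsle, fun i hi => ?_⟩
          exact mem_union_left _ (mem_stackF.mpr ⟨i, hi, by simp; omega, by simp; omega⟩)
        · exfalso
          apply hnot
          apply mem_union_left
          apply mem_stackF.mpr ⟨a - 1, by omega, by simp; omega, by simp; omega⟩
      · obtain ⟨t', ht', hrun⟩ := hst2 p h (fun hx => hnot (mem_union_right _ hx))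
        exact ⟨t', ht', fun i hi => mem_union_right _ (hrun i hi)⟩

end SecProof

namespace SecProof
open Finset

noncomputable def cCount (s m n : ℕ) : ℕ :=
  ((secFinset s m n).filter (fun P => (1, n) ∈ P)).card

noncomputable def bCount (s m n : ℕ) : ℕ :=
  ((secFinset s m n).filter (fun P => (1, n) ∉ P ∧ (P = ∅ → m ≤ n))).card

lemma isSec_empty (s m n : ℕ) : IsSecStruct s m n (∅ : Finset (ℕ × ℕ)) := by
  refine ⟨⟨?_, ?_, ?_, ?_⟩, ?_⟩ <;> intro p hp <;> simp at hp

lemma count_split (s m n : ℕ) :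
    secCount s m n = cCount s m n + bCount s m n + (if n < m then 1 else 0) := by
  classical
  rw [secCount, ← Finset.card_filter_add_card_filter_not (fun P => (1, n) ∈ P)]
  rw [cCount, bCount, add_assoc]
  congr 1
  rw [← Finset.card_filter_add_card_filter_not (fun P => P = ∅ → m ≤ n)
    (s := (secFinset s m n).filter (fun P => ¬ (1, n) ∈ P))]
  have hfirst : ((secFinset s m n).filter (fun P => ¬ (1, n) ∈ P)).filter (fun P => P = ∅ → m ≤ n)
      = (secFinset s m n).filter (fun P => (1, n) ∉ P ∧ (P = ∅ → m ≤ n)) := by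
    rw [Finset.filter_filter]
  rw [hfirst]
  congr 1
  rw [Finset.filter_filter]
  by_cases hnm : n < m
  · rw [if_pos hnm]
    have : ((secFinset s m n).filter fun a => ¬(1, n) ∈ a ∧ ¬(a = ∅ → m ≤ n)) = {∅} := by
      ext P
      simp only [Finset.mem_filter, Finset.mem_singleton]
      constructor
      · rintro ⟨_, _, h2⟩
        by_contra hne
        exact h2 (fun he => absurd he hne)
      · rintro rfl
        refine ⟨mem_secFinset.mpr (isSec_empty s m n), by simp, ?_⟩
        intro h
        exact absurd (h rfl) (by omega)
    rw [this, Finset.card_singleton]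
  · rw [if_neg hnm]
    have : ((secFinset s m n).filter fun a => ¬(1, n) ∈ a ∧ ¬(a = ∅ → m ≤ n)) = ∅ := by
      ext P
      simp only [Finset.mem_filter, Finset.notMem_empty, iff_false, not_and]
      intro _ _ h
      exact h (fun _ => by omega)
    rw [this, Finset.card_empty]

lemma split_dichotomy {s m a b : ℕ} {P : Finset (ℕ × ℕ)}
    (h : IsSecStruct s m (a + b) P) (hab : (a + 1, a + b) ∈ P) :
    ∀ p ∈ P, p.2 ≤ a ∨ a + 1 ≤ p.1 := by
  intro p hp
  by_contra hc
  push_neg at hc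
  obtain ⟨hc1, hc2⟩ := hc
  have hne : p ≠ (a + 1, a + b) := by
    intro he
    rw [he] at hc2
    simp only at hc2
    omega
  have hd := h.1.2.1 p hp (a + 1, a + b) hab hne
  have hb := h.1.1 p hp
  have hnc := h.1.2.2.1 p hp (a + 1, a + b) hab
  simp only at hd hnc
  omega

lemma card_split (s m a b : ℕ) :
    ((secFinset s m (a + b)).filter (fun P => (a + 1, a + b) ∈ P)).card
      = secCount s m a * cCount s m b := by
  classical
  rw [secCount, cCount, ← Finset.card_product]
  apply Finset.card_bij'
    (i := fun P _ => (P.filter (fun p => p.2 ≤ a), shDown a (P.filter (fun p => a + 1 ≤ p.1))))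
    (j := fun Q _ => Q.1 ∪ shUp a Q.2)
  · -- i maps into target
    intro P hP
    obtain ⟨hPmem, hab⟩ := Finset.mem_filter.mp hP
    have hsec := mem_secFinset.mp hPmem
    have hdich := split_dichotomy hsec hab
    set P₁ := P.filter (fun p => p.2 ≤ a) with hP₁
    set P₂ := P.filter (fun p => a + 1 ≤ p.1) with hP₂
    have hsplit : P₁ ∪ P₂ = P := by
      ext p
      simp only [hP₁, hP₂, Finset.mem_union, Finset.mem_filter]
      constructor
      · rintro (⟨h, _⟩ | ⟨h, _⟩) <;> exact h
      · intro hp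
        rcases hdich p hp with h | h
        · exact Or.inl ⟨hp, h⟩
        · exact Or.inr ⟨hp, h⟩
    have h₁ : ∀ p ∈ P₁, 1 ≤ p.1 ∧ p.1 < p.2 ∧ p.2 ≤ a := by
      intro p hp
      obtain ⟨hpP, hpa⟩ := Finset.mem_filter.mp hp
      have := hsec.1.1 p hpP
      omega
    have h₂ : ∀ p ∈ P₂, a + 1 ≤ p.1 ∧ p.1 < p.2 ∧ p.2 ≤ a + b := by
      intro p hp
      obtain ⟨hpP, hpa⟩ := Finset.mem_filter.mp hp
      have := hsec.1.1 p hpP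
      omega
    have hsec' : IsSecStruct s m (a + b) (P₁ ∪ P₂) := by rwa [hsplit]
    obtain ⟨hs1, hs2⟩ := (union_sec h₁ h₂).mp hsec'
    refine Finset.mem_product.mpr ⟨mem_secFinset.mpr hs1, Finset.mem_filter.mpr ⟨?_, ?_⟩⟩
    · exact mem_secFinset.mpr (isSec_shDown hs2)
    · apply mem_shDown.mpr
      refine ⟨(a + 1, a + b), Finset.mem_filter.mpr ⟨hab, by simp⟩, by simp, by simp⟩
  · -- j maps into source
    rintro ⟨Q₁, Q₂⟩ hQ
    obtain ⟨hQ₁, hQ₂'⟩ := Finset.mem_product.mp hQ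
    obtain ⟨hQ₂, h1b⟩ := Finset.mem_filter.mp hQ₂'
    have hs1 := mem_secFinset.mp hQ₁
    have hs2 := mem_secFinset.mp hQ₂
    have hw : WSec s m a b (shUp a Q₂) := wsec_shUp hs2
    have h₁ : ∀ p ∈ Q₁, 1 ≤ p.1 ∧ p.1 < p.2 ∧ p.2 ≤ a := hs1.1.1
    have h₂ : ∀ p ∈ shUp a Q₂, a + 1 ≤ p.1 ∧ p.1 < p.2 ∧ p.2 ≤ a + b := hw.1
    refine Finset.mem_filter.mpr ⟨mem_secFinset.mpr ((union_sec h₁ h₂).mpr ⟨hs1, hw⟩), ?_⟩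
    apply Finset.mem_union_right
    exact mem_shUp.mpr ⟨(1, b), h1b, by simp [Nat.add_comm], by simp [Nat.add_comm]⟩
  · -- left inverse
    intro P hP
    obtain ⟨hPmem, hab⟩ := Finset.mem_filter.mp hP
    have hsec := mem_secFinset.mp hPmem
    have hdich := split_dichotomy hsec hab
    simp only
    have hco : ∀ p ∈ P.filter (fun p => a + 1 ≤ p.1), a ≤ p.1 ∧ a ≤ p.2 := by
      intro p hp
      obtain ⟨hpP, hpa⟩ := Finset.mem_filter.mp hp
      have := hsec.1.1 p hpP
      omega
    rw [shUp_shDown hco]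
    ext p
    simp only [Finset.mem_union, Finset.mem_filter]
    constructor
    · rintro (⟨h, _⟩ | ⟨h, _⟩) <;> exact h
    · intro hp
      rcases hdich p hp with h | h
      · exact Or.inl ⟨hp, h⟩
      · exact Or.inr ⟨hp, h⟩
  · -- right inverse
    rintro ⟨Q₁, Q₂⟩ hQ
    obtain ⟨hQ₁, hQ₂'⟩ := Finset.mem_product.mp hQ
    obtain ⟨hQ₂, h1b⟩ := Finset.mem_filter.mp hQ₂'
    have hs1 := mem_secFinset.mp hQ₁
    have hs2 := mem_secFinset.mp hQ₂
    simp only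
    have e1 : (Q₁ ∪ shUp a Q₂).filter (fun p => p.2 ≤ a) = Q₁ := by
      rw [Finset.filter_union]
      have u1 : Q₁.filter (fun p => p.2 ≤ a) = Q₁ :=
        Finset.filter_true_of_mem (fun p hp => (hs1.1.1 p hp).2.2)
      have u2 : (shUp a Q₂).filter (fun p => p.2 ≤ a) = ∅ := by
        apply Finset.filter_false_of_mem
        intro p hp
        obtain ⟨q, hq, e1, e2⟩ := mem_shUp.mp hp
        have := hs2.1.1 q hq
        omega
      rw [u1, u2, Finset.union_empty]
    have e2 : (Q₁ ∪ shUp a Q₂).filter (fun p => a + 1 ≤ p.1) = shUp a Q₂ := by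
      rw [Finset.filter_union]
      have u1 : Q₁.filter (fun p => a + 1 ≤ p.1) = ∅ := by
        apply Finset.filter_false_of_mem
        intro p hp
        have := hs1.1.1 p hp
        omega
      have u2 : (shUp a Q₂).filter (fun p => a + 1 ≤ p.1) = shUp a Q₂ := by
        apply Finset.filter_true_of_mem
        intro p hp
        obtain ⟨q, hq, e1, e2⟩ := mem_shUp.mp hp
        have := hs2.1.1 q hq
        omega
      rw [u1, u2, Finset.empty_union]
    rw [e1, e2, shDown_shUp]

end SecProof

namespace SecProof
open Finset

noncomputable def pairIdx (n : ℕ) (P : Finset (ℕ × ℕ)) : ℕ :=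
  if h : ∃ j, (j, n) ∈ P then h.choose - 1 else 0

lemma rec_A (s m n : ℕ) (hn : 1 ≤ n) :
    secCount s m n = secCount s m (n - 1)
      + ∑ i ∈ Finset.range (n + 1), secCount s m i * cCount s m (n - i) := by
  classical
  have hkey : ∀ P, P ∈ secFinset s m n → Paired P n →
      ∃ j, 1 ≤ j ∧ (j, n) ∈ P ∧ pairIdx n P = j - 1 ∧ ∀ j', (j', n) ∈ P → j' = j := by
    intro P hPm hpd
    have hsec := mem_secFinset.mp hPm
    obtain ⟨p, hp, hx⟩ := hpd
    have hb := hsec.1.1 p hp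
    have hp2 : p.2 = n := by rcases hx with h | h; · omega
                             · exact h
    have hjn : (p.1, n) ∈ P := by
      have he : (p.1, n) = p := Prod.ext_iff.mpr ⟨rfl, hp2.symm⟩
      rw [he]; exact hp
    have hex : ∃ j, (j, n) ∈ P := ⟨p.1, hjn⟩
    have huniq : ∀ j', (j', n) ∈ P → j' = p.1 := by
      intro j' hj'
      by_contra hne
      have hne' : (j', n) ≠ (p.1, n) := by simp [hne]
      have := hsec.1.2.1 _ hj' _ hjn hne'
      simp only at this
      exact this.2.2.2 rfl
    refine ⟨p.1, by omega, hjn, ?_, huniq⟩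
    unfold pairIdx
    rw [dif_pos hex]
    have := huniq hex.choose hex.choose_spec
    omega
  rw [secCount, ← Finset.card_filter_add_card_filter_not (fun P => Paired P n),
    Nat.add_comm]
  congr 1
  · -- unpaired part
    have hset : (secFinset s m n).filter (fun P => ¬ Paired P n) = secFinset s m (n - 1) := by
      ext P
      simp only [Finset.mem_filter]
      constructor
      · rintro ⟨hPm, hnp⟩
        have hsec := mem_secFinset.mp hPm
        obtain ⟨⟨hb, hd, hnc, hh⟩, hst⟩ := hsec
        apply mem_secFinset.mpr
        refine ⟨⟨?_, hd, hnc, hh⟩, hst⟩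
        intro p hp
        have := hb p hp
        have h2 : p.2 ≠ n := fun he => hnp ⟨p, hp, Or.inr he⟩
        omega
      · intro hPm
        obtain ⟨⟨hb, hd, hnc, hh⟩, hst⟩ := mem_secFinset.mp hPm
        refine ⟨mem_secFinset.mpr ⟨⟨?_, hd, hnc, hh⟩, hst⟩, ?_⟩
        · intro p hp; have := hb p hp; omega
        · rintro ⟨p, hp, hx⟩
          have := hb p hp
          omega
    rw [hset, secCount]
  · -- paired part
    rw [Finset.card_eq_sum_card_fiberwise (f := fun P => pairIdx n P)
      (t := Finset.range (n + 1)) ?_]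
    · apply Finset.sum_congr rfl
      intro i hi
      have hi' : i ≤ n := by
        have := Finset.mem_range.mp hi
        omega
      have hfib : ((secFinset s m n).filter (fun P => Paired P n)).filter
            (fun P => pairIdx n P = i)
          = (secFinset s m n).filter (fun P => (i + 1, n) ∈ P) := by
        ext P
        simp only [Finset.mem_filter, and_assoc]
        constructor
        · rintro ⟨hPm, hpd, hpi⟩
          obtain ⟨j, hj1, hjn, hpidx, huniq⟩ := hkey P hPm hpd
          have hji : j = i + 1 := by omega
          rw [← hji]
          exact ⟨hPm, hjn⟩
        · rintro ⟨hPm, hin⟩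
          have hpd : Paired P n := ⟨(i + 1, n), hin, Or.inr rfl⟩
          obtain ⟨j, hj1, hjn, hpidx, huniq⟩ := hkey P hPm hpd
          have := huniq (i + 1) hin
          exact ⟨hPm, hpd, by omega⟩
      rw [hfib]
      have hcs := card_split s m i (n - i)
      rw [show i + (n - i) = n from by omega] at hcs
      exact hcs
    · intro P hP
      obtain ⟨hPm, hpd⟩ := Finset.mem_filter.mp hP
      obtain ⟨j, hj1, hjn, hpidx, _⟩ := hkey P hPm hpd
      have hb := (mem_secFinset.mp hPm).1.1 _ hjn
      simp only at hb
      rw [Finset.mem_coe, Finset.mem_range]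
      show pairIdx n P < n + 1
      omega

end SecProof

namespace SecProof
open Finset

lemma shUp_eq_empty {k : ℕ} {Q : Finset (ℕ × ℕ)} : shUp k Q = ∅ ↔ Q = ∅ :=
  Finset.image_eq_empty

lemma shDown_eq_empty {k : ℕ} {Q : Finset (ℕ × ℕ)} : shDown k Q = ∅ ↔ Q = ∅ :=
  Finset.image_eq_empty

lemma rest_bounds {s m n t : ℕ} {P : Finset (ℕ × ℕ)} (hsec : IsSecStruct s m n P)
    (hsub : stackF t n ⊆ P) :
    ∀ p ∈ P \ stackF t n, t + 1 ≤ p.1 ∧ p.1 < p.2 ∧ p.2 ≤ n - t := by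
  intro p hp
  obtain ⟨hpP, hpns⟩ := Finset.mem_sdiff.mp hp
  have hb := hsec.1.1 p hpP
  constructor
  · by_contra hc
    have hy : (p.1, n - (p.1 - 1)) ∈ stackF t n :=
      mem_stackF.mpr ⟨p.1 - 1, by omega, by simp; omega, by simp⟩
    by_cases hpy : p = (p.1, n - (p.1 - 1))
    · exact hpns (hpy ▸ hy)
    · have := hsec.1.2.1 p hpP _ (hsub hy) hpy
      simp only at this
      exact this.1 rfl
  · refine ⟨hb.2.1, ?_⟩
    by_contra hc
    have hy : (n - p.2 + 1, n - (n - p.2)) ∈ stackF t n :=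
      mem_stackF.mpr ⟨n - p.2, by omega, by simp, by simp⟩
    have hy2 : n - (n - p.2) = p.2 := by omega
    by_cases hpy : p = (n - p.2 + 1, n - (n - p.2))
    · exact hpns (hpy ▸ hy)
    · have := hsec.1.2.1 p hpP _ (hsub hy) hpy
      simp only at this
      exact this.2.2.2 hy2.symm

/-- per-fiber bijection for closed structures with outer stack exactly `t` -/
lemma card_fiber_B (s m n t : ℕ) (ht1 : 1 ≤ t) (htn : 2 * t ≤ n) :
    (((secFinset s m n).filter (fun P => (1, n) ∈ P)).filter
        (fun P => (∀ a < t, (a + 1, n - a) ∈ P) ∧ (t + 1, n - t) ∉ P)).card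
      = (if s ≤ t then bCount s m (n - 2 * t) else 0) := by
  classical
  by_cases hst : s ≤ t
  · rw [if_pos hst, bCount]
    apply Finset.card_bij'
      (i := fun P _ => shDown t (P \ stackF t n))
      (j := fun Q _ => stackF t n ∪ shUp t Q)
    · -- i maps into target
      intro P hP
      obtain ⟨hP', hrun, hnotP⟩ := Finset.mem_filter.mp hP
      obtain ⟨hPm, h1n⟩ := Finset.mem_filter.mp hP'
      have hsec := mem_secFinset.mp hPm
      have hsub : stackF t n ⊆ P := by
        intro x hx
        obtain ⟨a, ha, e1, e2⟩ := mem_stackF.mp hx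
        have he : x = (a + 1, n - a) := Prod.ext_iff.mpr ⟨e1, e2⟩
        rw [he]
        exact hrun a ha
      have hrest : ∀ p ∈ P \ stackF t n, t + 1 ≤ p.1 ∧ p.1 < p.2 ∧ p.2 ≤ n - t :=
        rest_bounds hsec hsub
      have hsplitP : stackF t n ∪ (P \ stackF t n) = P := Finset.union_sdiff_of_subset hsub
      have hniP : (t + 1, n - t) ∉ P \ stackF t n :=
        fun h => hnotP (Finset.mem_sdiff.mp h).1
      have hsec' : IsSecStruct s m n (stackF t n ∪ (P \ stackF t n)) := by rwa [hsplitP]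
      obtain ⟨_, hhe, hw⟩ := (nest_sec ht1 htn hrest hniP).mp hsec'
      refine Finset.mem_filter.mpr ⟨mem_secFinset.mpr (isSec_shDown hw), ?_, ?_⟩
      · intro hmem
        obtain ⟨q, hq, e1, e2⟩ := mem_shDown.mp hmem
        simp only at e1 e2
        obtain ⟨g1, g2, g3⟩ := hrest q hq
        have he : q = (t + 1, n - t) := Prod.ext_iff.mpr ⟨by omega, by omega⟩
        exact hniP (he ▸ hq)
      · intro he
        exact hhe (shDown_eq_empty.mp he)
    · -- j maps into source
      intro Q hQ
      obtain ⟨hQm, hQ1, hQe⟩ := Finset.mem_filter.mp hQ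
      have hQsec := mem_secFinset.mp hQm
      have hw' : WSec s m t (n - 2 * t) (shUp t Q) := wsec_shUp hQsec
      have h₂ : ∀ p ∈ shUp t Q, t + 1 ≤ p.1 ∧ p.1 < p.2 ∧ p.2 ≤ n - t := by
        intro p hp
        have := hw'.1 p hp
        omega
      have hni' : (t + 1, n - t) ∉ shUp t Q := by
        intro hmem
        obtain ⟨q, hq, e1, e2⟩ := mem_shUp.mp hmem
        simp only at e1 e2
        have hb := hQsec.1.1 q hq
        have he : (1, n - 2 * t) = q := Prod.ext_iff.mpr ⟨by omega, by omega⟩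
        exact hQ1 (he ▸ hq)
      have hsec' : IsSecStruct s m n (stackF t n ∪ shUp t Q) :=
        (nest_sec ht1 htn h₂ hni').mpr ⟨hst, fun he => hQe (shUp_eq_empty.mp he), hw'⟩
      refine Finset.mem_filter.mpr ⟨Finset.mem_filter.mpr ⟨mem_secFinset.mpr hsec', ?_⟩, ?_, ?_⟩
      · exact Finset.mem_union_left _ (mem_stackF.mpr ⟨0, ht1, by simp, by simp⟩)
      · intro a ha
        exact Finset.mem_union_left _ (mem_stackF.mpr ⟨a, ha, rfl, rfl⟩)
      · intro hmem
        rcases Finset.mem_union.mp hmem with h | h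
        · obtain ⟨a, ha, e1, e2⟩ := mem_stackF.mp h
          simp only at e1 e2
          omega
        · exact hni' h
    · -- left inverse
      intro P hP
      obtain ⟨hP', hrun, hnotP⟩ := Finset.mem_filter.mp hP
      obtain ⟨hPm, h1n⟩ := Finset.mem_filter.mp hP'
      have hsec := mem_secFinset.mp hPm
      have hsub : stackF t n ⊆ P := by
        intro x hx
        obtain ⟨a, ha, e1, e2⟩ := mem_stackF.mp hx
        have he : x = (a + 1, n - a) := Prod.ext_iff.mpr ⟨e1, e2⟩
        rw [he]
        exact hrun a ha
      have hrest : ∀ p ∈ P \ stackF t n, t ≤ p.1 ∧ t ≤ p.2 := by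
        intro p hp
        have := rest_bounds hsec hsub p hp
        omega
      rw [shUp_shDown hrest]
      exact Finset.union_sdiff_of_subset hsub
    · -- right inverse
      intro Q hQ
      have hdisj : Disjoint (stackF t n) (shUp t Q) := by
        rw [Finset.disjoint_left]
        intro x hx hx'
        obtain ⟨a, ha, e1, e2⟩ := mem_stackF.mp hx
        obtain ⟨q, hq, f1, f2⟩ := mem_shUp.mp hx'
        have hb := (mem_secFinset.mp (Finset.mem_filter.mp hQ).1).1.1 q hq
        omega
      rw [Finset.union_sdiff_cancel_left hdisj, shDown_shUp]
  · -- s > t : fiber is empty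
    rw [if_neg hst]
    rw [Finset.card_eq_zero]
    ext P
    simp only [Finset.notMem_empty, iff_false]
    intro hP
    obtain ⟨hP', hrun, hnotP⟩ := Finset.mem_filter.mp hP
    obtain ⟨hPm, h1n⟩ := Finset.mem_filter.mp hP'
    have hsec := mem_secFinset.mp hPm
    have hb1n := hsec.1.1 (1, n) h1n
    simp only at hb1n
    have h0 : (((1:ℕ), n).1 - 1, ((1:ℕ), n).2 + 1) ∉ P := by
      intro hmem
      have := hsec.1.1 _ hmem
      simp only at this
      omega
    obtain ⟨t', ht', hrun'⟩ := hsec.2 (1, n) h1n h0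
    have htt : t' ≤ t := by
      by_contra hc
      have hm : ((1:ℕ) + t, n - t) ∈ P := hrun' t (by omega)
      have : ((1:ℕ) + t, n - t) = (t + 1, n - t) := by rw [Nat.add_comm]
      rw [this] at hm
      exact hnotP hm
    omega

end SecProof

namespace SecProof
open Finset

lemma closed_facts {s m n : ℕ} {P : Finset (ℕ × ℕ)} (hs : 1 ≤ s)
    (hPm : P ∈ secFinset s m n) (h1n : (1, n) ∈ P) :
    s ≤ Nat.findGreatest (fun u => ∀ a < u, (a + 1, n - a) ∈ P) n ∧
    2 * Nat.findGreatest (fun u => ∀ a < u, (a + 1, n - a) ∈ P) n ≤ n ∧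
    (∀ a < Nat.findGreatest (fun u => ∀ a < u, (a + 1, n - a) ∈ P) n, (a + 1, n - a) ∈ P) ∧
    (Nat.findGreatest (fun u => ∀ a < u, (a + 1, n - a) ∈ P) n + 1,
      n - Nat.findGreatest (fun u => ∀ a < u, (a + 1, n - a) ∈ P) n) ∉ P := by
  classical
  have hsec := mem_secFinset.mp hPm
  have hb1n := hsec.1.1 _ h1n
  simp only at hb1n
  have h0 : (((1:ℕ), n).1 - 1, ((1:ℕ), n).2 + 1) ∉ P := by
    intro hmem
    have := hsec.1.1 _ hmem
    simp only at this
    omega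
  obtain ⟨t', ht', hrun'⟩ := hsec.2 (1, n) h1n h0
  have hprop : ∀ a < t', (a + 1, n - a) ∈ P := by
    intro a ha
    have h2 : (1 + a, n - a) ∈ P := hrun' a ha
    rwa [Nat.add_comm] at h2
  have ht'n : t' ≤ n := by
    have := hsec.1.1 _ (hprop (t' - 1) (by omega))
    simp only at this
    omega
  have hge : t' ≤ Nat.findGreatest (fun u => ∀ a < u, (a + 1, n - a) ∈ P) n :=
    Nat.le_findGreatest ht'n hprop
  have hgs : s ≤ Nat.findGreatest (fun u => ∀ a < u, (a + 1, n - a) ∈ P) n :=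
    le_trans ht' hge
  have hgprop : ∀ a < Nat.findGreatest (fun u => ∀ a < u, (a + 1, n - a) ∈ P) n,
      (a + 1, n - a) ∈ P :=
    Nat.findGreatest_spec (P := fun u => ∀ a < u, (a + 1, n - a) ∈ P) (Nat.zero_le n)
      (fun a ha => absurd ha (Nat.not_lt_zero a))
  have hgn : 2 * Nat.findGreatest (fun u => ∀ a < u, (a + 1, n - a) ∈ P) n ≤ n := by
    have := hsec.1.1 _
      (hgprop (Nat.findGreatest (fun u => ∀ a < u, (a + 1, n - a) ∈ P) n - 1) (by omega))
    simp only at this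
    omega
  refine ⟨hgs, hgn, hgprop, ?_⟩
  intro hmem
  have hng : ¬ (∀ a < Nat.findGreatest (fun u => ∀ a < u, (a + 1, n - a) ∈ P) n + 1,
      (a + 1, n - a) ∈ P) :=
    Nat.findGreatest_is_greatest (P := fun u => ∀ a < u, (a + 1, n - a) ∈ P) (n := n)
      (by omega) (by omega)
  apply hng
  intro a ha
  rcases Nat.lt_or_ge a (Nat.findGreatest (fun u => ∀ a < u, (a + 1, n - a) ∈ P) n) with h | h
  · exact hgprop a h
  · have he : a = Nat.findGreatest (fun u => ∀ a < u, (a + 1, n - a) ∈ P) n := by omega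
    rwa [he]

lemma rec_B (s m n : ℕ) (hs : 1 ≤ s) :
    cCount s m n = ∑ t ∈ Finset.Icc s (n / 2), bCount s m (n - 2 * t) := by
  classical
  rw [cCount, Finset.card_eq_sum_card_fiberwise
    (f := fun P => Nat.findGreatest (fun u => ∀ a < u, (a + 1, n - a) ∈ P) n)
    (t := Finset.Icc s (n / 2))
    (fun P hP => by
      obtain ⟨hPm, h1n⟩ := Finset.mem_filter.mp hP
      obtain ⟨h1, h2, _, _⟩ := closed_facts hs hPm h1n
      rw [Finset.mem_coe, Finset.mem_Icc]
      constructor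
      · exact h1
      · show Nat.findGreatest (fun u => ∀ a < u, (a + 1, n - a) ∈ P) n ≤ n / 2
        omega)]
  apply Finset.sum_congr rfl
  intro t htmem
  obtain ⟨hts, htn2⟩ := Finset.mem_Icc.mp htmem
  have ht1 : 1 ≤ t := le_trans hs hts
  have htn : 2 * t ≤ n := by omega
  have hfib : ((secFinset s m n).filter (fun P => (1, n) ∈ P)).filter
        (fun P => (fun P => Nat.findGreatest (fun u => ∀ a < u, (a + 1, n - a) ∈ P) n) P = t)
      = ((secFinset s m n).filter (fun P => (1, n) ∈ P)).filter
        (fun P => (∀ a < t, (a + 1, n - a) ∈ P) ∧ (t + 1, n - t) ∉ P) := by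
    apply Finset.filter_congr
    intro P hP
    obtain ⟨hPm, h1n⟩ := Finset.mem_filter.mp hP
    obtain ⟨hgs, hgn, hgprop, hgnot⟩ := closed_facts hs hPm h1n
    show Nat.findGreatest (fun u => ∀ a < u, (a + 1, n - a) ∈ P) n = t ↔ _
    constructor
    · rintro rfl
      exact ⟨hgprop, hgnot⟩
    · rintro ⟨hrun, hnot⟩
      have hle : t ≤ Nat.findGreatest (fun u => ∀ a < u, (a + 1, n - a) ∈ P) n :=
        Nat.le_findGreatest (by omega) hrun
      have hge : Nat.findGreatest (fun u => ∀ a < u, (a + 1, n - a) ∈ P) n ≤ t := by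
        by_contra hc
        exact hnot (hgprop t (by omega))
      omega
  rw [hfib, card_fiber_B s m n t ht1 htn, if_pos hts]

end SecProof

namespace SecProof
open Finset

lemma rec_B' (s m n : ℕ) (hs : 1 ≤ s) :
    cCount s m n = (if 2 ≤ n then cCount s m (n - 2) else 0)
      + (if 2 * s ≤ n then bCount s m (n - 2 * s) else 0) := by
  rw [rec_B s m n hs, rec_B s m (n - 2) hs]
  by_cases h2 : 2 ≤ n
  · rw [if_pos h2]
    by_cases h2s : 2 * s ≤ n
    · rw [if_pos h2s]
      have hsmem : s ∈ Finset.Icc s (n / 2) := Finset.mem_Icc.mpr ⟨le_rfl, by omega⟩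
      rw [← Finset.add_sum_erase _ _ hsmem, Finset.Icc_erase_left, ← Finset.Icc_add_one_left_eq_Ioc]
      rw [Nat.add_comm]
      congr 1
      refine Finset.sum_bij' (fun t _ => t - 1) (fun t _ => t + 1)
        ?_hi ?_hj ?_li ?_ri ?_val
      case _hi =>
        intro a ha
        have := Finset.mem_Icc.mp ha
        rw [Finset.mem_Icc]
        beta_reduce
        omega
      case _hj =>
        intro a ha
        have := Finset.mem_Icc.mp ha
        rw [Finset.mem_Icc]
        beta_reduce
        omega
      case _li =>
        intro a ha
        have := Finset.mem_Icc.mp ha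
        beta_reduce
        omega
      case _ri =>
        intro a ha
        have := Finset.mem_Icc.mp ha
        beta_reduce
        omega
      case _val =>
        intro a ha
        have h := Finset.mem_Icc.mp ha
        beta_reduce
        have he : n - 2 * a = n - 2 - 2 * (a - 1) := by omega
        rw [he]
    · rw [if_neg h2s]
      rw [Finset.Icc_eq_empty (by omega : ¬ s ≤ n / 2),
        Finset.Icc_eq_empty (by omega : ¬ s ≤ (n - 2) / 2)]
      simp
  · rw [if_neg h2, if_neg (by omega : ¬ 2 * s ≤ n)]
    rw [Finset.Icc_eq_empty (by omega : ¬ s ≤ n / 2)]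
    simp

noncomputable def Cgf (s m : ℕ) : PowerSeries ℚ := PowerSeries.mk fun n => (cCount s m n : ℚ)
noncomputable def Bgf (s m : ℕ) : PowerSeries ℚ := PowerSeries.mk fun n => (bCount s m n : ℚ)

lemma secCount_zero (s m : ℕ) : secCount s m 0 = 1 := by
  rw [secCount]
  have he : secFinset s m 0 = {∅} := by
    ext P
    simp only [Finset.mem_singleton]
    rw [mem_secFinset]
    constructor
    · intro h
      apply Finset.eq_empty_iff_forall_notMem.mpr
      intro p hp
      have := h.1.1 p hp
      omega
    · rintro rfl
      exact isSec_empty s m 0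
  rw [he, Finset.card_singleton]

lemma cCount_zero (s m : ℕ) : cCount s m 0 = 0 := by
  rw [cCount, Finset.card_eq_zero, Finset.filter_eq_empty_iff]
  intro P hPm h1
  have := (mem_secFinset.mp hPm).1.1 _ h1
  simp only at this
  omega

lemma E1 (s m : ℕ) : Rgf s m = 1 + PowerSeries.X * Rgf s m + Rgf s m * Cgf s m := by
  apply PowerSeries.ext
  intro n
  rw [show (PowerSeries.X : PowerSeries ℚ) * Rgf s m = Rgf s m * PowerSeries.X ^ 1 by ring]
  rw [map_add, map_add, PowerSeries.coeff_one, PowerSeries.coeff_mul_X_pow',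
    PowerSeries.coeff_mul, Finset.Nat.sum_antidiagonal_eq_sum_range_succ_mk]
  simp only [Rgf, Cgf, PowerSeries.coeff_mk]
  rcases Nat.eq_zero_or_pos n with rfl | hn
  · simp [secCount_zero, cCount_zero]
  · rw [if_neg (by omega), if_pos (by omega), rec_A s m n hn]
    push_cast
    ring

lemma E2 (s m : ℕ) : Rgf s m = Cgf s m + Bgf s m + Tmgf m := by
  apply PowerSeries.ext
  intro n
  rw [map_add, map_add]
  simp only [Rgf, Cgf, Bgf, PowerSeries.coeff_mk, Tmgf, map_sum, PowerSeries.coeff_X_pow]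
  rw [Finset.sum_ite_eq (Finset.range m) n (fun _ => (1 : ℚ))]
  simp only [Finset.mem_range]
  rw [count_split s m n]
  by_cases h : n < m
  · rw [if_pos h, if_pos h]
    push_cast
    ring
  · rw [if_neg h, if_neg h]
    push_cast
    ring

lemma E3 (s m : ℕ) (hs : 1 ≤ s) :
    (1 - PowerSeries.X ^ 2) * Cgf s m = PowerSeries.X ^ (2 * s) * Bgf s m := by
  apply PowerSeries.ext
  intro n
  rw [show (1 - PowerSeries.X ^ 2) * Cgf s m
      = Cgf s m - Cgf s m * PowerSeries.X ^ 2 by ring,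
    show PowerSeries.X ^ (2 * s) * Bgf s m = Bgf s m * PowerSeries.X ^ (2 * s) by ring,
    map_sub, PowerSeries.coeff_mul_X_pow', PowerSeries.coeff_mul_X_pow']
  simp only [Cgf, Bgf, PowerSeries.coeff_mk]
  have hkey := rec_B' s m n hs
  by_cases h2 : 2 ≤ n <;> by_cases h2s : 2 * s ≤ n
  · rw [if_pos h2, if_pos h2s] at hkey ⊢
    rw [hkey]
    push_cast
    ring
  · rw [if_pos h2, if_neg h2s] at hkey ⊢
    rw [hkey]
    push_cast
    ring
  · exfalso
    omega
  · rw [if_neg h2, if_neg h2s] at hkey ⊢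
    rw [hkey]
    push_cast
    ring

end SecProof

theorem stmt2 (s m : ℕ) (hs : 1 ≤ s) (hm : 1 ≤ m) :
    PowerSeries.X ^ (2 * s) * Rgf s m ^ 2
      - ((1 - PowerSeries.X) * (1 - PowerSeries.X ^ 2 + PowerSeries.X ^ (2 * s))
          + PowerSeries.X ^ (2 * s) * Tmgf m) * Rgf s m
      + (1 - PowerSeries.X ^ 2 + PowerSeries.X ^ (2 * s)) = 0 := by
  have e1 := SecProof.E1 s m
  have e2 := SecProof.E2 s m
  have e3 := SecProof.E3 s m hs
  linear_combination
    (-(1 - PowerSeries.X ^ 2 + PowerSeries.X ^ (2 * s))) * e1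
    - Rgf s m * e3
    + (PowerSeries.X ^ (2 * s) * Rgf s m) * e2
end

section
/- In ℚ[[z]] the generating function B satisfies [2(1−z²+z^{2s})·B(z) − (1−z)(1−z²+z^{2s}) + z^{2s}T_m(z)]² = Δ(z); equivalently, B(z) = ((1−z)(1−z²+z^{2s}) − z^{2s}T_m(z) − Δ(z)^{1/2}) / (2(1−z²+z^{2s})) for the appropriate square root of Δ. -/
open scoped Classical

namespace SecAux
open Finset

noncomputable def shiftUp (c : ℕ) (P : Finset (ℕ × ℕ)) : Finset (ℕ × ℕ) :=
  P.image fun p => (p.1 + c, p.2 + c)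

lemma mem_shiftUp {c : ℕ} {P : Finset (ℕ × ℕ)} {a b : ℕ} :
    (a + c, b + c) ∈ shiftUp c P ↔ (a, b) ∈ P := by
  constructor
  · rintro h
    simp only [shiftUp, Finset.mem_image] at h
    obtain ⟨p, hp, he⟩ := h
    obtain ⟨h1, h2⟩ := Prod.mk.injEq .. ▸ he
    have : p = (a, b) := by
      ext <;> simp_all <;> omega
    rwa [this] at hp
  · intro h
    simp only [shiftUp, Finset.mem_image]
    exact ⟨(a,b), h, rfl⟩

lemma mem_shiftUp' {c : ℕ} {P : Finset (ℕ × ℕ)} {q : ℕ × ℕ} (h : q ∈ shiftUp c P) :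
    ∃ a b, (a, b) ∈ P ∧ q = (a + c, b + c) := by
  simp only [shiftUp, Finset.mem_image] at h
  obtain ⟨p, hp, he⟩ := h
  exact ⟨p.1, p.2, by simpa using hp, he.symm⟩

lemma mem_secFinset {s m n : ℕ} {P : Finset (ℕ × ℕ)} :
    P ∈ secFinset s m n ↔ IsSecStruct s m n P := by
  simp only [secFinset, Finset.mem_filter, Finset.mem_powerset, and_iff_right_iff_imp]
  intro h p hp
  have := h.1.1 p hp
  simp only [Finset.mem_product, Finset.mem_range]
  omega

lemma empty_mem (s m n : ℕ) : (∅ : Finset (ℕ × ℕ)) ∈ secFinset s m n := by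
  rw [mem_secFinset]
  refine ⟨⟨?_, ?_, ?_, ?_⟩, ?_⟩ <;> intro p hp <;> simp at hp

lemma r_zero (s m : ℕ) : secCount s m 0 = 1 := by
  have : secFinset s m 0 = {∅} := by
    ext P
    simp only [Finset.mem_singleton]
    constructor
    · intro h
      rw [mem_secFinset] at h
      ext p
      simp only [Finset.notMem_empty, iff_false]
      intro hp
      have := h.1.1 p hp
      omega
    · rintro rfl; exact empty_mem s m 0
  rw [secCount, this, Finset.card_singleton]

lemma b_small (s m : ℕ) (hm : 1 ≤ m) (n : ℕ) (hn : n ≤ 2) : secCountB s m n = 0 := by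
  rw [secCountB, Finset.card_eq_zero]
  ext P
  simp only [Finset.mem_filter, Finset.notMem_empty, iff_false, not_and]
  intro hP hmem
  rw [mem_secFinset] at hP
  have h1 := hP.1.1 _ hmem
  simp only at h1
  -- 1 < n ≤ 2 so n = 2, hairpin fails
  have hn2 : n = 2 := by omega
  subst hn2
  have := hP.1.2.2.2 _ hmem (by intro x hx1 hx2; omega)
  simp at this; omega

end SecAux
namespace SecAux
open Finset

lemma glue {s m c q : ℕ} {P₁ P₂ : Finset (ℕ × ℕ)}
    (h₁ : IsSecStruct s m c P₁) (h₂ : IsSecStruct s m q P₂) :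
    IsSecStruct s m (c + q) (P₁ ∪ shiftUp c P₂) := by
  obtain ⟨⟨hb₁, hu₁, hc₁, hh₁⟩, hs₁⟩ := h₁
  obtain ⟨⟨hb₂, hu₂, hc₂, hh₂⟩, hs₂⟩ := h₂
  have hJ : ∀ p ∈ P₁ ∪ shiftUp c P₂, (p ∈ P₁ ∧ 1 ≤ p.1 ∧ p.1 < p.2 ∧ p.2 ≤ c)
      ∨ ∃ a b, (a, b) ∈ P₂ ∧ p = (a + c, b + c) ∧ 1 ≤ a ∧ a < b ∧ b ≤ q := by
    intro p hp
    rcases Finset.mem_union.1 hp with h | h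
    · exact Or.inl ⟨h, hb₁ _ h⟩
    · obtain ⟨a, b, hab, rfl⟩ := mem_shiftUp' h
      have hb := hb₂ _ hab
      exact Or.inr ⟨a, b, hab, rfl, hb.1, hb.2.1, hb.2.2⟩
  refine ⟨⟨?_, ?_, ?_, ?_⟩, ?_⟩
  · intro p hp
    rcases hJ p hp with ⟨_, h⟩ | ⟨a, b, _, rfl, h⟩
    · exact ⟨h.1, h.2.1, by omega⟩
    · exact (by omega : 1 ≤ a + c ∧ a + c < b + c ∧ b + c ≤ c + q)
  · intro p hp q' hq' hne
    rcases hJ p hp with ⟨hp₁, hpB⟩ | ⟨a, b, hab, rfl, hB⟩ <;>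
      rcases hJ q' hq' with ⟨hq₁, hqB⟩ | ⟨a', b', hab', rfl, hB'⟩
    · exact hu₁ _ hp₁ _ hq₁ hne
    · exact (by omega : p.1 ≠ a' + c ∧ p.1 ≠ b' + c ∧ p.2 ≠ a' + c ∧ p.2 ≠ b' + c)
    · exact (by omega : a + c ≠ q'.1 ∧ a + c ≠ q'.2 ∧ b + c ≠ q'.1 ∧ b + c ≠ q'.2)
    · have hne' : (a, b) ≠ (a', b') := by
        intro h
        apply hne
        have h1 : a = a' := congrArg Prod.fst h
        have h2 : b = b' := congrArg Prod.snd h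
        rw [h1, h2]
      have h4 : a ≠ a' ∧ a ≠ b' ∧ b ≠ a' ∧ b ≠ b' := hu₂ _ hab _ hab' hne'
      exact (by omega : a + c ≠ a' + c ∧ a + c ≠ b' + c ∧ b + c ≠ a' + c ∧ b + c ≠ b' + c)
  · intro p hp q' hq'
    rcases hJ p hp with ⟨hp₁, hpB⟩ | ⟨a, b, hab, rfl, hB⟩ <;>
      rcases hJ q' hq' with ⟨hq₁, hqB⟩ | ⟨a', b', hab', rfl, hB'⟩
    · exact hc₁ _ hp₁ _ hq₁
    · exact (by omega : ¬(p.1 < a' + c ∧ a' + c < p.2 ∧ p.2 < b' + c))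
    · exact (by omega : ¬(a + c < q'.1 ∧ q'.1 < b + c ∧ b + c < q'.2))
    · have h4 : ¬(a < a' ∧ a' < b ∧ b < b') := hc₂ _ hab _ hab'
      exact (by omega : ¬(a + c < a' + c ∧ a' + c < b + c ∧ b + c < b' + c))
  · intro p hp hx
    rcases hJ p hp with ⟨hp₁, hpB⟩ | ⟨a, b, hab, rfl, hB⟩
    · refine hh₁ _ hp₁ (fun x h1 h2 hP => hx x h1 h2 ?_)
      obtain ⟨p', hp', he⟩ := hP
      exact ⟨p', Finset.mem_union_left _ hp', he⟩
    · have hm2 : m ≤ b - a - 1 := by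
        apply hh₂ _ hab
        intro x h1 h2 hPx
        obtain ⟨p', hp', he⟩ := hPx
        have hb' : 1 ≤ p'.1 ∧ p'.1 < p'.2 ∧ p'.2 ≤ q := hb₂ _ hp'
        refine hx (x + c) (Nat.add_lt_add_right h1 c) (Nat.add_lt_add_right h2 c)
          ⟨(p'.1 + c, p'.2 + c), Finset.mem_union_right _ ?_, ?_⟩
        · simp only [shiftUp, Finset.mem_image]
          exact ⟨p', hp', rfl⟩
        · rcases he with h | h
          · exact Or.inl (by omega : p'.1 + c = x + c)
          · exact Or.inr (by omega : p'.2 + c = x + c)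
      exact (by omega : m ≤ (b + c) - (a + c) - 1)
  · intro p hp hnmem
    rcases hJ p hp with ⟨hp₁, hpB⟩ | ⟨a, b, hab, rfl, hB⟩
    · obtain ⟨t, hts, hrun⟩ := hs₁ p hp₁ (fun h => hnmem (Finset.mem_union_left _ h))
      exact ⟨t, hts, fun x hx => Finset.mem_union_left _ (hrun x hx)⟩
    · have hnm₂ : (a - 1, b + 1) ∉ P₂ := by
        intro h
        have h1 : 1 ≤ a - 1 ∧ a - 1 < b + 1 ∧ b + 1 ≤ q := hb₂ _ h
        have hmem : ((a - 1) + c, (b + 1) + c) ∈ shiftUp c P₂ := mem_shiftUp.2 h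
        apply hnmem
        refine Finset.mem_union_right _ ?_
        have he : ((a + c, b + c).1 - 1, (a + c, b + c).2 + 1)
            = ((a - 1) + c, (b + 1) + c) := by
          show (a + c - 1, b + c + 1) = _
          rw [Prod.mk.injEq]
          omega
        rw [he]
        exact hmem
      obtain ⟨t, hts, hrun⟩ := hs₂ _ hab hnm₂
      refine ⟨t, hts, fun x hx => ?_⟩
      have h1 := hrun x hx
      have h2 : 1 ≤ a + x ∧ a + x < b - x ∧ b - x ≤ q := hb₂ _ h1
      refine Finset.mem_union_right _ ?_
      have hmem : ((a + x) + c, (b - x) + c) ∈ shiftUp c P₂ := mem_shiftUp.2 h1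
      have he : ((a + c, b + c).1 + x, (a + c, b + c).2 - x)
          = ((a + x) + c, (b - x) + c) := by
        show (a + c + x, b + c - x) = _
        rw [Prod.mk.injEq]
        omega
      rw [he]
      exact hmem

end SecAux
namespace SecAux
open Finset

noncomputable def shiftDown (c : ℕ) (P : Finset (ℕ × ℕ)) : Finset (ℕ × ℕ) :=
  P.image fun p => (p.1 - c, p.2 - c)

lemma empty_isSecStruct (s m n : ℕ) : IsSecStruct s m n (∅ : Finset (ℕ × ℕ)) :=
  mem_secFinset.1 (empty_mem s m n)

lemma shiftUp_isSecStruct {s m c q : ℕ} {Q : Finset (ℕ × ℕ)}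
    (h : IsSecStruct s m q Q) : IsSecStruct s m (c + q) (shiftUp c Q) := by
  have := glue (empty_isSecStruct s m c) h
  rwa [Finset.empty_union] at this

lemma mem_shiftDown {c : ℕ} {P : Finset (ℕ × ℕ)} {a b : ℕ}
    (h : (a + c, b + c) ∈ P) : (a, b) ∈ shiftDown c P := by
  simp only [shiftDown, Finset.mem_image]
  exact ⟨(a + c, b + c), h, by rw [Prod.mk.injEq]; constructor <;> show _ - _ = _ <;> omega⟩

lemma mem_shiftDown' {c : ℕ} {P : Finset (ℕ × ℕ)} {q : ℕ × ℕ} (h : q ∈ shiftDown c P) :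
    ∃ p ∈ P, q = (p.1 - c, p.2 - c) := by
  simp only [shiftDown, Finset.mem_image] at h
  obtain ⟨p, hp, he⟩ := h
  exact ⟨p, hp, he.symm⟩

lemma shiftUp_shiftDown {c : ℕ} {P : Finset (ℕ × ℕ)} (hP : ∀ p ∈ P, c + 1 ≤ p.1 ∧ p.1 < p.2) :
    shiftUp c (shiftDown c P) = P := by
  ext p
  constructor
  · intro hp
    obtain ⟨a, b, hab, rfl⟩ := mem_shiftUp' hp
    obtain ⟨p', hp', he⟩ := mem_shiftDown' hab
    have hb := hP _ hp'
    have h1 : a = p'.1 - c := congrArg Prod.fst he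
    have h2 : b = p'.2 - c := congrArg Prod.snd he
    have : (a + c, b + c) = p' := by
      rw [Prod.mk.injEq]; constructor <;> omega
    rwa [this]
  · intro hp
    have hb := hP _ hp
    have h1 : ((p.1 - c) + c, (p.2 - c) + c) ∈ shiftUp c (shiftDown c P) :=
      mem_shiftUp.2 (mem_shiftDown (by rwa [show p.1 - c + c = p.1 by omega,
        show p.2 - c + c = p.2 by omega, Prod.mk.eta]))
    rwa [show ((p.1 - c) + c, (p.2 - c) + c) = p by rw [Prod.mk.injEq]; constructor <;> omega]
      at h1

lemma of_shiftUp {s m c q : ℕ} {Q : Finset (ℕ × ℕ)}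
    (h : IsSecStruct s m (c + q) (shiftUp c Q)) (hQ : ∀ p ∈ Q, 1 ≤ p.1 ∧ p.1 < p.2) :
    IsSecStruct s m q Q := by
  obtain ⟨⟨hb, hu, hc, hh⟩, hst⟩ := h
  have hmem : ∀ p ∈ Q, (p.1 + c, p.2 + c) ∈ shiftUp c Q := by
    intro p hp
    exact mem_shiftUp.2 (by rwa [Prod.mk.eta])
  refine ⟨⟨?_, ?_, ?_, ?_⟩, ?_⟩
  · intro p hp
    have h1 := hb _ (hmem p hp)
    have h2 := hQ _ hp
    have h3 : 1 ≤ p.1 + c ∧ p.1 + c < p.2 + c ∧ p.2 + c ≤ c + q := h1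
    exact ⟨h2.1, h2.2, by omega⟩
  · intro p hp q' hq' hne
    have hne' : (p.1 + c, p.2 + c) ≠ (q'.1 + c, q'.2 + c) := by
      intro he
      apply hne
      have h1 : p.1 + c = q'.1 + c := congrArg Prod.fst he
      have h2 : p.2 + c = q'.2 + c := congrArg Prod.snd he
      have : p = (q'.1, q'.2) := by rw [Prod.mk.injEq]; omega
      rw [this, Prod.mk.eta]
    have h4 : p.1 + c ≠ q'.1 + c ∧ p.1 + c ≠ q'.2 + c ∧ p.2 + c ≠ q'.1 + c
        ∧ p.2 + c ≠ q'.2 + c := hu _ (hmem p hp) _ (hmem q' hq') hne'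
    exact (by omega : p.1 ≠ q'.1 ∧ p.1 ≠ q'.2 ∧ p.2 ≠ q'.1 ∧ p.2 ≠ q'.2)
  · intro p hp q' hq'
    have h4 : ¬(p.1 + c < q'.1 + c ∧ q'.1 + c < p.2 + c ∧ p.2 + c < q'.2 + c) :=
      hc _ (hmem p hp) _ (hmem q' hq')
    omega
  · intro p hp hx
    have h2 := hQ _ hp
    have h5 : m ≤ (p.2 + c) - (p.1 + c) - 1 := by
      apply hh _ (hmem p hp)
      intro y hy1 hy2 hPy
      obtain ⟨p', hp', he⟩ := hPy
      obtain ⟨a', b', hab', rfl⟩ := mem_shiftUp' hp'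
      have hb' := hQ _ hab'
      rcases he with he | he
      · exact hx a' (by omega) (by omega) ⟨(a', b'), hab', Or.inl rfl⟩
      · exact hx b' (by omega) (by omega) ⟨(a', b'), hab', Or.inr rfl⟩
    omega
  · intro p hp hnm
    have h2 := hQ _ hp
    have hnm' : ((p.1 + c) - 1, (p.2 + c) + 1) ∉ shiftUp c Q := by
      intro hm2
      obtain ⟨a', b', hab', he⟩ := mem_shiftUp' hm2
      apply hnm
      have h1 : p.1 + c - 1 = a' + c := congrArg Prod.fst he
      have h2' : p.2 + c + 1 = b' + c := congrArg Prod.snd he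
      have : (p.1 - 1, p.2 + 1) = (a', b') := by rw [Prod.mk.injEq]; omega
      rwa [this]
    obtain ⟨t, hts, hrun⟩ := hst _ (hmem p hp) hnm'
    refine ⟨t, hts, fun a ha => ?_⟩
    have h1 := hrun a ha
    have hval : 1 ≤ (p.1 + c) + a ∧ (p.1 + c) + a < (p.2 + c) - a ∧ (p.2 + c) - a ≤ c + q :=
      hb _ h1
    obtain ⟨a', b', hab', he⟩ := mem_shiftUp' h1
    have hb' := hQ _ hab'
    have he1 : p.1 + c + a = a' + c := congrArg Prod.fst he
    have he2 : p.2 + c - a = b' + c := congrArg Prod.snd he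
    have : (p.1 + a, p.2 - a) = (a', b') := by rw [Prod.mk.injEq]; omega
    rwa [this]

lemma shiftDown_isSecStruct {s m c q : ℕ} {P : Finset (ℕ × ℕ)}
    (h : IsSecStruct s m (c + q) P) (h1 : ∀ p ∈ P, c + 1 ≤ p.1) :
    IsSecStruct s m q (shiftDown c P) := by
  have hP : ∀ p ∈ P, c + 1 ≤ p.1 ∧ p.1 < p.2 := fun p hp => ⟨h1 p hp, (h.1.1 p hp).2.1⟩
  have hQ : ∀ p ∈ shiftDown c P, 1 ≤ p.1 ∧ p.1 < p.2 := by
    intro p hp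
    obtain ⟨p', hp', rfl⟩ := mem_shiftDown' hp
    have := hP _ hp'
    exact ⟨by omega, by omega⟩
  exact of_shiftUp (by rwa [shiftUp_shiftDown hP]) hQ

end SecAux
namespace SecAux
open Finset

lemma subset_isSecStruct {s m n n' : ℕ} {P Q : Finset (ℕ × ℕ)}
    (h : IsSecStruct s m n P) (hsub : Q ⊆ P)
    (hbnd : ∀ p ∈ Q, p.2 ≤ n')
    (hwit : ∀ p ∈ Q, ∀ x, p.1 < x → x < p.2 → ∀ p' ∈ P, p'.1 = x ∨ p'.2 = x → p' ∈ Q)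
    (hadj : ∀ p ∈ Q, (p.1 - 1, p.2 + 1) ∈ P → (p.1 - 1, p.2 + 1) ∈ Q)
    (hrun : ∀ p ∈ Q, ∀ a, (p.1 + a, p.2 - a) ∈ P → (p.1 + a, p.2 - a) ∈ Q) :
    IsSecStruct s m n' Q := by
  obtain ⟨⟨hb, hu, hc, hh⟩, hst⟩ := h
  refine ⟨⟨?_, ?_, ?_, ?_⟩, ?_⟩
  · intro p hp
    have := hb _ (hsub hp)
    exact ⟨this.1, this.2.1, hbnd _ hp⟩
  · intro p hp q hq hne
    exact hu _ (hsub hp) _ (hsub hq) hne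
  · intro p hp q hq
    exact hc _ (hsub hp) _ (hsub hq)
  · intro p hp hx
    refine hh _ (hsub hp) ?_
    intro x h1 h2 hPx
    obtain ⟨p', hp', he⟩ := hPx
    exact hx x h1 h2 ⟨p', hwit p hp x h1 h2 p' hp' he, he⟩
  · intro p hp hnm
    have hnm' : (p.1 - 1, p.2 + 1) ∉ P := fun hin => hnm (hadj p hp hin)
    obtain ⟨t, hts, hrunP⟩ := hst _ (hsub hp) hnm'
    exact ⟨t, hts, fun a ha => hrun p hp a (hrunP a ha)⟩

lemma confineI {s m n i : ℕ} {P : Finset (ℕ × ℕ)} (h : IsSecStruct s m n P)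
    (hmem : (i, n) ∈ P) : ∀ p ∈ P, p.2 < i ∨ i ≤ p.1 := by
  intro p hp
  have hbp : 1 ≤ p.1 ∧ p.1 < p.2 ∧ p.2 ≤ n := h.1.1 _ hp
  have hbi : 1 ≤ i ∧ i < n ∧ n ≤ n := h.1.1 _ hmem
  by_cases hpi : p = (i, n)
  · right
    have : p.1 = i := by rw [hpi]
    omega
  · have hdist : p.1 ≠ i ∧ p.1 ≠ n ∧ p.2 ≠ i ∧ p.2 ≠ n := h.1.2.1 _ hp _ hmem hpi
    have hnc : ¬(p.1 < i ∧ i < p.2 ∧ p.2 < n) := h.1.2.2.1 _ hp _ hmem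
    omega

lemma confineII {s m n ℓ : ℕ} {P : Finset (ℕ × ℕ)} (h : IsSecStruct s m n P)
    (hstk : ∀ c < ℓ, (c + 1, n - c) ∈ P) :
    ∀ p ∈ P, (∃ c < ℓ, p = (c + 1, n - c)) ∨ (ℓ + 1 ≤ p.1 ∧ p.2 ≤ n - ℓ) := by
  have key : ∀ c ≤ ℓ, ∀ p ∈ P, (∃ c' < c, p = (c' + 1, n - c')) ∨ (c + 1 ≤ p.1 ∧ p.2 ≤ n - c) := by
    intro c
    induction c with
    | zero =>
      intro _ p hp
      have := h.1.1 _ hp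
      right; omega
    | succ c ih =>
      intro hc p hp
      rcases ih (by omega) p hp with ⟨c', hc', he⟩ | ⟨h1, h2⟩
      · exact Or.inl ⟨c', by omega, he⟩
      · have hsc : (c + 1, n - c) ∈ P := hstk c (by omega)
        by_cases hpe : p = (c + 1, n - c)
        · exact Or.inl ⟨c, by omega, hpe⟩
        · have hdist : p.1 ≠ c + 1 ∧ p.1 ≠ n - c ∧ p.2 ≠ c + 1 ∧ p.2 ≠ n - c :=
            h.1.2.1 _ hp _ hsc hpe
          have hbsc : 1 ≤ c + 1 ∧ c + 1 < n - c ∧ n - c ≤ n := h.1.1 _ hsc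
          right; omega
  exact key ℓ le_rfl

lemma shiftDown_shiftUp {c : ℕ} {P : Finset (ℕ × ℕ)} : shiftDown c (shiftUp c P) = P := by
  rw [shiftDown, shiftUp, Finset.image_image]
  have : ((fun p : ℕ × ℕ => (p.1 - c, p.2 - c)) ∘ fun p : ℕ × ℕ => (p.1 + c, p.2 + c)) = id := by
    funext p
    simp only [Function.comp_apply, id_eq]
    rw [Prod.mk.injEq]
    constructor <;> show _ - _ = _ <;> omega
  rw [this, Finset.image_id]

end SecAux
namespace SecAux
open Finset

lemma fiberI_card (s m n i : ℕ) (hi : 1 ≤ i) (hin : i < n) :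
    ((secFinset s m n).filter (fun P => (i, n) ∈ P)).card
      = secCount s m (i - 1) * secCountB s m (n - i + 1) := by
  rw [secCount, secCountB, ← Finset.card_product]
  have hc1 : (i - 1) + 1 = i := by omega
  have hcq : (i - 1) + (n - i + 1) = n := by omega
  refine Finset.card_bij'
    (fun P _ => (P.filter (fun p => p.2 ≤ i - 1), shiftDown (i - 1) (P.filter (fun p => i ≤ p.1))))
    (fun Q _ => Q.1 ∪ shiftUp (i - 1) Q.2) ?_ ?_ ?_ ?_
  · -- forward membership
    intro P hP
    rw [Finset.mem_filter] at hP
    obtain ⟨hPsec, hmem⟩ := hP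
    have h := mem_secFinset.1 hPsec
    have hconf := confineI h hmem
    have hbnd := h.1.1
    rw [Finset.mem_product]
    refine ⟨mem_secFinset.2 ?_, Finset.mem_filter.2 ⟨mem_secFinset.2 ?_, ?_⟩⟩
    · -- low part
      refine subset_isSecStruct h (Finset.filter_subset _ _) ?_ ?_ ?_ ?_
      · intro p hp
        exact (Finset.mem_filter.1 hp).2
      · intro p hp x hx1 hx2 p' hp' he
        have hpl : p.2 ≤ i - 1 := (Finset.mem_filter.1 hp).2
        have hcf : p'.2 < i ∨ i ≤ p'.1 := hconf _ hp'
        have hb' : 1 ≤ p'.1 ∧ p'.1 < p'.2 ∧ p'.2 ≤ n := hbnd _ hp'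
        exact Finset.mem_filter.2 ⟨hp', by omega⟩
      · intro p hp hin'
        have hpl : p.2 ≤ i - 1 := (Finset.mem_filter.1 hp).2
        have hb : 1 ≤ p.1 ∧ p.1 < p.2 ∧ p.2 ≤ i - 1 :=
          ⟨(hbnd _ (Finset.mem_filter.1 hp).1).1, (hbnd _ (Finset.mem_filter.1 hp).1).2.1, hpl⟩
        have hcf : p.2 + 1 < i ∨ i ≤ p.1 - 1 := hconf _ hin'
        exact Finset.mem_filter.2 ⟨hin', by omega⟩
      · intro p hp a hin'
        have hpl : p.2 ≤ i - 1 := (Finset.mem_filter.1 hp).2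
        exact Finset.mem_filter.2 ⟨hin', by omega⟩
    · -- high part
      have hPh : IsSecStruct s m ((i - 1) + (n - i + 1)) (P.filter (fun p => i ≤ p.1)) := by
        rw [hcq]
        refine subset_isSecStruct h (Finset.filter_subset _ _) ?_ ?_ ?_ ?_
        · intro p hp
          exact (hbnd _ (Finset.mem_filter.1 hp).1).2.2
        · intro p hp x hx1 hx2 p' hp' he
          have hph : i ≤ p.1 := (Finset.mem_filter.1 hp).2
          have hcf : p'.2 < i ∨ i ≤ p'.1 := hconf _ hp'
          have hb' : 1 ≤ p'.1 ∧ p'.1 < p'.2 ∧ p'.2 ≤ n := hbnd _ hp'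
          exact Finset.mem_filter.2 ⟨hp', by omega⟩
        · intro p hp hin'
          have hph : i ≤ p.1 := (Finset.mem_filter.1 hp).2
          have hb : 1 ≤ p.1 ∧ p.1 < p.2 ∧ p.2 ≤ n := hbnd _ (Finset.mem_filter.1 hp).1
          have hcf : p.2 + 1 < i ∨ i ≤ p.1 - 1 := hconf _ hin'
          exact Finset.mem_filter.2 ⟨hin', by omega⟩
        · intro p hp a hin'
          have hph : i ≤ p.1 := (Finset.mem_filter.1 hp).2
          exact Finset.mem_filter.2 ⟨hin', by omega⟩
      refine shiftDown_isSecStruct hPh ?_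
      intro p hp
      have := (Finset.mem_filter.1 hp).2
      omega
    · -- (1, n-i+1) ∈ high part
      have : (1 + (i - 1), (n - i + 1) + (i - 1)) ∈ P.filter (fun p => i ≤ p.1) := by
        have he : (1 + (i - 1), (n - i + 1) + (i - 1)) = (i, n) := by
          rw [Prod.mk.injEq]; omega
        rw [he]
        exact Finset.mem_filter.2 ⟨hmem, by omega⟩
      exact mem_shiftDown this
  · -- backward membership
    intro Q hQ
    rw [Finset.mem_product] at hQ
    obtain ⟨hQ1, hQ2⟩ := hQ
    rw [Finset.mem_filter] at hQ2
    have h1 := mem_secFinset.1 hQ1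
    have h2 := mem_secFinset.1 hQ2.1
    refine Finset.mem_filter.2 ⟨mem_secFinset.2 ?_, ?_⟩
    · have := glue h1 h2
      rwa [hcq] at this
    · refine Finset.mem_union_right _ ?_
      have := (mem_shiftUp (c := i - 1) (P := Q.2) (a := 1) (b := n - i + 1)).2 hQ2.2
      rwa [show (1 + (i - 1), (n - i + 1) + (i - 1)) = (i, n) by rw [Prod.mk.injEq]; omega]
        at this
  · -- left inverse
    intro P hP
    rw [Finset.mem_filter] at hP
    obtain ⟨hPsec, hmem⟩ := hP
    have h := mem_secFinset.1 hPsec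
    have hconf := confineI h hmem
    have hbnd := h.1.1
    simp only
    rw [shiftUp_shiftDown (by
      intro p hp
      have := (Finset.mem_filter.1 hp).2
      exact ⟨by omega, (hbnd _ (Finset.mem_filter.1 hp).1).2.1⟩)]
    ext p
    simp only [Finset.mem_union, Finset.mem_filter]
    constructor
    · rintro (⟨h1, _⟩ | ⟨h1, _⟩) <;> exact h1
    · intro hp
      have := hconf _ hp
      rcases this with h1 | h1
      · exact Or.inl ⟨hp, by omega⟩
      · exact Or.inr ⟨hp, h1⟩
  · -- right inverse
    intro Q hQ
    rw [Finset.mem_product] at hQ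
    obtain ⟨hQ1, hQ2⟩ := hQ
    rw [Finset.mem_filter] at hQ2
    have h1 := mem_secFinset.1 hQ1
    have h2 := mem_secFinset.1 hQ2.1
    have hb1 := h1.1.1
    have hb2 := h2.1.1
    refine Prod.ext ?_ ?_
    · -- low filter recovers Q.1
      show (Q.1 ∪ shiftUp (i - 1) Q.2).filter (fun p => p.2 ≤ i - 1) = Q.1
      ext p
      simp only [Finset.mem_filter, Finset.mem_union]
      constructor
      · rintro ⟨h1' | h1', h2'⟩
        · exact h1'
        · obtain ⟨a, b, hab, rfl⟩ := mem_shiftUp' h1'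
          have hb : 1 ≤ a ∧ a < b ∧ b ≤ n - i + 1 := hb2 _ hab
          have : (a + (i - 1), b + (i - 1)).2 ≤ i - 1 := h2'
          omega
      · intro hp
        have : 1 ≤ p.1 ∧ p.1 < p.2 ∧ p.2 ≤ i - 1 := hb1 _ hp
        exact ⟨Or.inl hp, by omega⟩
    · -- high filter recovers Q.2
      show shiftDown (i - 1) ((Q.1 ∪ shiftUp (i - 1) Q.2).filter (fun p => i ≤ p.1)) = Q.2
      have : (Q.1 ∪ shiftUp (i - 1) Q.2).filter (fun p => i ≤ p.1) = shiftUp (i - 1) Q.2 := by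
        ext p
        simp only [Finset.mem_filter, Finset.mem_union]
        constructor
        · rintro ⟨h1' | h1', h2'⟩
          · have : 1 ≤ p.1 ∧ p.1 < p.2 ∧ p.2 ≤ i - 1 := hb1 _ h1'
            omega
          · exact h1'
        · intro hp
          obtain ⟨a, b, hab, rfl⟩ := mem_shiftUp' hp
          have hb : 1 ≤ a ∧ a < b ∧ b ≤ n - i + 1 := hb2 _ hab
          exact ⟨Or.inr hp, by omega⟩
      rw [this, shiftDown_shiftUp]

end SecAux
namespace SecAux
open Finset

lemma not_paired_eq {s m n : ℕ} (hn : 1 ≤ n) :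
    (secFinset s m n).filter (fun P => ¬ Paired P n) = secFinset s m (n - 1) := by
  ext P
  simp only [Finset.mem_filter]
  constructor
  · rintro ⟨hP, hnp⟩
    have h := mem_secFinset.1 hP
    refine mem_secFinset.2 (subset_isSecStruct h (Finset.Subset.refl _) ?_
      (fun p hp x _ _ p' hp' _ => hp') (fun p _ h' => h') (fun p _ a h' => h'))
    intro p hp
    have hb : 1 ≤ p.1 ∧ p.1 < p.2 ∧ p.2 ≤ n := h.1.1 _ hp
    have hne : p.2 ≠ n := fun he => hnp ⟨p, hp, Or.inr he⟩
    omega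
  · intro hP
    have h := mem_secFinset.1 hP
    refine ⟨mem_secFinset.2 (subset_isSecStruct h (Finset.Subset.refl _) ?_
      (fun p hp x _ _ p' hp' _ => hp') (fun p _ h' => h') (fun p _ a h' => h')), ?_⟩
    · intro p hp
      have hb : 1 ≤ p.1 ∧ p.1 < p.2 ∧ p.2 ≤ n - 1 := h.1.1 _ hp
      omega
    · rintro ⟨p, hp, he⟩
      have hb : 1 ≤ p.1 ∧ p.1 < p.2 ∧ p.2 ≤ n - 1 := h.1.1 _ hp
      omega
  
lemma paired_biUnion {s m n : ℕ} :
    (secFinset s m n).filter (fun P => Paired P n)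
      = (Finset.Icc 1 (n - 1)).biUnion
          (fun i => (secFinset s m n).filter (fun P => (i, n) ∈ P)) := by
  ext P
  simp only [Finset.mem_filter, Finset.mem_biUnion, Finset.mem_Icc]
  constructor
  · rintro ⟨hP, p, hp, he⟩
    have h := mem_secFinset.1 hP
    have hb : 1 ≤ p.1 ∧ p.1 < p.2 ∧ p.2 ≤ n := h.1.1 _ hp
    have hp2 : p.2 = n := by omega
    refine ⟨p.1, ⟨hb.1, by omega⟩, hP, ?_⟩
    have : (p.1, n) = p := Prod.ext rfl hp2.symm
    rwa [this]
  · rintro ⟨i, hi, hP, hmem⟩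
    exact ⟨hP, (i, n), hmem, Or.inr rfl⟩

lemma recI (s m : ℕ) (hm : 1 ≤ m) (n : ℕ) (hn : 1 ≤ n) :
    secCount s m n = secCount s m (n - 1)
      + ∑ j ∈ Finset.range (n + 1), secCount s m (n - j) * secCountB s m j := by
  have hsplit := Finset.card_filter_add_card_filter_not
    (s := secFinset s m n) (p := fun P => Paired P n)
  have hdisj : ∀ i ∈ Finset.Icc 1 (n - 1), ∀ i' ∈ Finset.Icc 1 (n - 1), i ≠ i' →
      Disjoint ((secFinset s m n).filter (fun P => (i, n) ∈ P))
        ((secFinset s m n).filter (fun P => (i', n) ∈ P)) := by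
    intro i _ i' _ hne
    rw [Finset.disjoint_left]
    intro P h1 h2
    rw [Finset.mem_filter] at h1 h2
    have h := mem_secFinset.1 h1.1
    have hne' : (i, n) ≠ (i', n) := by
      intro he
      exact hne (congrArg Prod.fst he)
    have := h.1.2.1 _ h1.2 _ h2.2 hne'
    exact absurd (rfl : n = n) this.2.2.2
  have hcard : ((secFinset s m n).filter (fun P => Paired P n)).card
      = ∑ i ∈ Finset.Icc 1 (n - 1), secCount s m (i - 1) * secCountB s m (n - i + 1) := by
    rw [paired_biUnion, Finset.card_biUnion hdisj]
    refine Finset.sum_congr rfl (fun i hi => ?_)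
    rw [Finset.mem_Icc] at hi
    exact fiberI_card s m n i hi.1 (by omega)
  have hreindex : ∑ i ∈ Finset.Icc 1 (n - 1), secCount s m (i - 1) * secCountB s m (n - i + 1)
      = ∑ j ∈ Finset.Icc 2 n, secCount s m (n - j) * secCountB s m j := by
    refine Finset.sum_nbij' (fun i => n - i + 1) (fun j => n - j + 1) ?_ ?_ ?_ ?_ ?_
    · intro i hi
      rw [Finset.mem_Icc] at hi ⊢
      omega
    · intro j hj
      rw [Finset.mem_Icc] at hj ⊢
      omega
    · intro i hi
      rw [Finset.mem_Icc] at hi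
      omega
    · intro j hj
      rw [Finset.mem_Icc] at hj
      omega
    · intro i hi
      rw [Finset.mem_Icc] at hi
      rw [show n - (n - i + 1) = i - 1 by omega]
  have hextend : ∑ j ∈ Finset.Icc 2 n, secCount s m (n - j) * secCountB s m j
      = ∑ j ∈ Finset.range (n + 1), secCount s m (n - j) * secCountB s m j := by
    refine Finset.sum_subset ?_ ?_
    · intro j hj
      rw [Finset.mem_Icc] at hj
      rw [Finset.mem_range]
      omega
    · intro j hj hnj
      rw [Finset.mem_range] at hj
      rw [Finset.mem_Icc] at hnj
      have : j ≤ 2 := by omega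
      rw [b_small s m hm j this, Nat.mul_zero]
  have hnpc : ((secFinset s m n).filter (fun P => ¬ Paired P n)).card = secCount s m (n - 1) := by
    rw [not_paired_eq hn]; rfl
  show (secFinset s m n).card = _
  rw [← hsplit, hcard, hreindex, hextend, hnpc]
  exact Nat.add_comm _ _

end SecAux
namespace SecAux
open Finset

noncomputable def stackSet (l n : ℕ) : Finset (ℕ × ℕ) :=
  (Finset.range l).image (fun c => (c + 1, n - c))

lemma mem_stackSet {l n : ℕ} {p : ℕ × ℕ} :
    p ∈ stackSet l n ↔ ∃ c < l, p = (c + 1, n - c) := by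
  simp only [stackSet, Finset.mem_image, Finset.mem_range]
  constructor
  · rintro ⟨c, hc, rfl⟩; exact ⟨c, hc, rfl⟩
  · rintro ⟨c, hc, rfl⟩; exact ⟨c, hc, rfl⟩

lemma wrap {s m l q n : ℕ} (hs : 1 ≤ s) (hl : s ≤ l) (hn : n = q + 2 * l)
    {Q : Finset (ℕ × ℕ)} (hQ : IsSecStruct s m q Q) (hne : (1, q) ∉ Q)
    (hhp : Q.Nonempty ∨ m ≤ q) :
    IsSecStruct s m n (stackSet l n ∪ shiftUp l Q) := by
  obtain ⟨⟨hb, hu, hc, hh⟩, hst⟩ := hQ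
  have hJ : ∀ p ∈ stackSet l n ∪ shiftUp l Q, (∃ c < l, p = (c + 1, n - c))
      ∨ ∃ a b, (a, b) ∈ Q ∧ p = (a + l, b + l) ∧ 1 ≤ a ∧ a < b ∧ b ≤ q := by
    intro p hp
    rcases Finset.mem_union.1 hp with h | h
    · exact Or.inl (mem_stackSet.1 h)
    · obtain ⟨a, b, hab, rfl⟩ := mem_shiftUp' h
      have hb' := hb _ hab
      exact Or.inr ⟨a, b, hab, rfl, hb'.1, hb'.2.1, hb'.2.2⟩
  refine ⟨⟨?_, ?_, ?_, ?_⟩, ?_⟩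
  · intro p hp
    rcases hJ p hp with ⟨c, hc, rfl⟩ | ⟨a, b, _, rfl, hB⟩
    · exact (by omega : 1 ≤ c + 1 ∧ c + 1 < n - c ∧ n - c ≤ n)
    · exact (by omega : 1 ≤ a + l ∧ a + l < b + l ∧ b + l ≤ n)
  · intro p hp q' hq' hnep
    rcases hJ p hp with ⟨c, hc, rfl⟩ | ⟨a, b, hab, rfl, hB⟩ <;>
      rcases hJ q' hq' with ⟨c', hc', rfl⟩ | ⟨a', b', hab', rfl, hB'⟩
    · have hcc : c ≠ c' := fun he => hnep (by rw [he])
      exact (by omega : c + 1 ≠ c' + 1 ∧ c + 1 ≠ n - c' ∧ n - c ≠ c' + 1 ∧ n - c ≠ n - c')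
    · exact (by omega : c + 1 ≠ a' + l ∧ c + 1 ≠ b' + l ∧ n - c ≠ a' + l ∧ n - c ≠ b' + l)
    · exact (by omega : a + l ≠ c' + 1 ∧ a + l ≠ n - c' ∧ b + l ≠ c' + 1 ∧ b + l ≠ n - c')
    · have hne' : (a, b) ≠ (a', b') := by
        intro h
        apply hnep
        have h1 : a = a' := congrArg Prod.fst h
        have h2 : b = b' := congrArg Prod.snd h
        rw [h1, h2]
      have h4 : a ≠ a' ∧ a ≠ b' ∧ b ≠ a' ∧ b ≠ b' := hu _ hab _ hab' hne'
      exact (by omega : a + l ≠ a' + l ∧ a + l ≠ b' + l ∧ b + l ≠ a' + l ∧ b + l ≠ b' + l)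
  · intro p hp q' hq'
    rcases hJ p hp with ⟨c, hc, rfl⟩ | ⟨a, b, hab, rfl, hB⟩ <;>
      rcases hJ q' hq' with ⟨c', hc', rfl⟩ | ⟨a', b', hab', rfl, hB'⟩
    · exact (by omega : ¬(c + 1 < c' + 1 ∧ c' + 1 < n - c ∧ n - c < n - c'))
    · exact (by omega : ¬(c + 1 < a' + l ∧ a' + l < n - c ∧ n - c < b' + l))
    · exact (by omega : ¬(a + l < c' + 1 ∧ c' + 1 < b + l ∧ b + l < n - c'))
    · have h4 : ¬(a < a' ∧ a' < b ∧ b < b') := hc _ hab _ hab'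
      exact (by omega : ¬(a + l < a' + l ∧ a' + l < b + l ∧ b + l < b' + l))
  · intro p hp hx
    rcases hJ p hp with ⟨c, hc, rfl⟩ | ⟨a, b, hab, rfl, hB⟩
    · by_cases hcl : c + 1 < l
      · refine absurd (a := Paired (stackSet l n ∪ shiftUp l Q) (c + 2)) ?_
          (hx (c + 2) (by omega : c + 1 < c + 2) (by omega : c + 2 < n - c))
        exact ⟨(c + 1 + 1, n - (c + 1)), Finset.mem_union_left _
          (mem_stackSet.2 ⟨c + 1, hcl, rfl⟩), Or.inl (by omega : c + 1 + 1 = c + 2)⟩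
      · rcases hhp with ⟨q0, hq0⟩ | hmq
        · have hb0 : 1 ≤ q0.1 ∧ q0.1 < q0.2 ∧ q0.2 ≤ q := hb _ hq0
          refine absurd (a := Paired (stackSet l n ∪ shiftUp l Q) (q0.1 + l)) ?_
            (hx (q0.1 + l) (by omega : c + 1 < q0.1 + l) (by omega : q0.1 + l < n - c))
          exact ⟨(q0.1 + l, q0.2 + l), Finset.mem_union_right _
            (mem_shiftUp.2 (by rwa [Prod.mk.eta])), Or.inl rfl⟩
        · exact (by omega : m ≤ (n - c) - (c + 1) - 1)
    · have hm2 : m ≤ b - a - 1 := by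
        apply hh _ hab
        intro x h1 h2 hPx
        obtain ⟨p', hp', he⟩ := hPx
        have hb' : 1 ≤ p'.1 ∧ p'.1 < p'.2 ∧ p'.2 ≤ q := hb _ hp'
        refine hx (x + l) (Nat.add_lt_add_right h1 l) (Nat.add_lt_add_right h2 l)
          ⟨(p'.1 + l, p'.2 + l), Finset.mem_union_right _ ?_, ?_⟩
        · simp only [shiftUp, Finset.mem_image]
          exact ⟨p', hp', rfl⟩
        · rcases he with h | h
          · exact Or.inl (by omega : p'.1 + l = x + l)
          · exact Or.inr (by omega : p'.2 + l = x + l)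
      exact (by omega : m ≤ (b + l) - (a + l) - 1)
  · intro p hp hnm
    rcases hJ p hp with ⟨c, hc, rfl⟩ | ⟨a, b, hab, rfl, hB⟩
    · by_cases hc0 : c = 0
      · subst hc0
        refine ⟨l, hl, fun a ha => Finset.mem_union_left _ (mem_stackSet.2 ⟨a, ha, ?_⟩)⟩
        show (0 + 1 + a, n - 0 - a) = (a + 1, n - a)
        rw [Prod.mk.injEq]
        omega
      · exfalso
        apply hnm
        refine Finset.mem_union_left _ (mem_stackSet.2 ⟨c - 1, by omega, ?_⟩)
        show (c + 1 - 1, n - c + 1) = (c - 1 + 1, n - (c - 1))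
        rw [Prod.mk.injEq]
        omega
    · have hnm2 : (a - 1, b + 1) ∉ Q := by
        intro h
        have h1 : 1 ≤ a - 1 ∧ a - 1 < b + 1 ∧ b + 1 ≤ q := hb _ h
        apply hnm
        refine Finset.mem_union_right _ ?_
        have hmem : ((a - 1) + l, (b + 1) + l) ∈ shiftUp l Q := mem_shiftUp.2 h
        have he : ((a + l, b + l).1 - 1, (a + l, b + l).2 + 1) = ((a - 1) + l, (b + 1) + l) := by
          show (a + l - 1, b + l + 1) = _
          rw [Prod.mk.injEq]
          omega
        rw [he]
        exact hmem
      obtain ⟨t, hts, hrun⟩ := hst _ hab hnm2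
      refine ⟨t, hts, fun x hx => ?_⟩
      have h1 := hrun x hx
      have h2 : 1 ≤ a + x ∧ a + x < b - x ∧ b - x ≤ q := hb _ h1
      refine Finset.mem_union_right _ ?_
      have hmem : ((a + x) + l, (b - x) + l) ∈ shiftUp l Q := mem_shiftUp.2 h1
      have he : ((a + l, b + l).1 + x, (a + l, b + l).2 - x) = ((a + x) + l, (b - x) + l) := by
        show (a + l + x, b + l - x) = _
        rw [Prod.mk.injEq]
        omega
      rw [he]
      exact hmem

end SecAux
namespace SecAux
open Finset

noncomputable def innerFinset (s m q : ℕ) : Finset (Finset (ℕ × ℕ)) :=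
  (secFinset s m q).filter (fun Q => (1, q) ∉ Q ∧ (Q.Nonempty ∨ m ≤ q))

lemma fiberII_card (s m n l : ℕ) (hs : 1 ≤ s) (hl : s ≤ l) (h2l : 2 * l ≤ n) :
    ((secFinset s m n).filter
        (fun P => (∀ c < l, (c + 1, n - c) ∈ P) ∧ (l + 1, n - l) ∉ P)).card
      = (innerFinset s m (n - 2 * l)).card := by
  refine Finset.card_bij'
    (fun P _ => shiftDown l (P.filter (fun p => l + 1 ≤ p.1)))
    (fun Q _ => stackSet l n ∪ shiftUp l Q) ?_ ?_ ?_ ?_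
  · -- forward membership
    intro P hP
    rw [Finset.mem_filter] at hP
    obtain ⟨hPsec, hstk, hmax⟩ := hP
    have h := mem_secFinset.1 hPsec
    have conf := confineII h hstk
    have hbnd := h.1.1
    have hin : ∀ p ∈ P.filter (fun p => l + 1 ≤ p.1), l + 1 ≤ p.1 ∧ p.2 ≤ n - l := by
      intro p hp
      rw [Finset.mem_filter] at hp
      rcases conf p hp.1 with ⟨c, hc, rfl⟩ | hi
      · have : l + 1 ≤ c + 1 := hp.2
        omega
      · exact hi
    have hPh : IsSecStruct s m (l + (n - 2 * l)) (P.filter (fun p => l + 1 ≤ p.1)) := by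
      rw [show l + (n - 2 * l) = n - l by omega]
      refine subset_isSecStruct h (Finset.filter_subset _ _) ?_ ?_ ?_ ?_
      · intro p hp
        exact (hin p hp).2
      · intro p hp x hx1 hx2 p' hp' he
        have hi := hin p hp
        refine Finset.mem_filter.2 ⟨hp', ?_⟩
        rcases conf p' hp' with ⟨c, hc, rfl⟩ | hi'
        · have he' : c + 1 = x ∨ n - c = x := he
          omega
        · exact hi'.1
      · intro p hp hpa
        have hi := hin p hp
        have hb' : 1 ≤ p.1 ∧ p.1 < p.2 ∧ p.2 ≤ n := hbnd _ (Finset.mem_filter.1 hp).1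
        refine Finset.mem_filter.2 ⟨hpa, ?_⟩
        rcases conf _ hpa with ⟨c, hc, he⟩ | hi'
        · have he1 : p.1 - 1 = c + 1 := congrArg Prod.fst he
          have he2 : p.2 + 1 = n - c := congrArg Prod.snd he
          exfalso
          apply hmax
          have : p = (l + 1, n - l) := by
            rw [Prod.mk.injEq]
            omega
          rw [← this]
          exact (Finset.mem_filter.1 hp).1
        · exact (by omega : l + 1 ≤ p.1 - 1)
      · intro p hp a hpa
        have hi := hin p hp
        exact Finset.mem_filter.2 ⟨hpa, by omega⟩
    rw [innerFinset, Finset.mem_filter]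
    refine ⟨mem_secFinset.2 (shiftDown_isSecStruct hPh ?_), ?_, ?_⟩
    · intro p hp
      exact (hin p hp).1
    · -- (1, n - 2l) not in the shifted part
      intro hmem'
      obtain ⟨p, hp, he⟩ := mem_shiftDown' hmem'
      have hi := hin p hp
      have hb' : 1 ≤ p.1 ∧ p.1 < p.2 ∧ p.2 ≤ n := hbnd _ (Finset.mem_filter.1 hp).1
      have he1 : (1 : ℕ) = p.1 - l := congrArg Prod.fst he
      have he2 : n - 2 * l = p.2 - l := congrArg Prod.snd he
      apply hmax
      have : p = (l + 1, n - l) := by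
        rw [Prod.mk.injEq]
        omega
      rw [← this]
      exact (Finset.mem_filter.1 hp).1
    · rcases Finset.eq_empty_or_nonempty (P.filter (fun p => l + 1 ≤ p.1)) with hemp | ⟨p0, hp0⟩
      · right
        have hpl : ((l - 1) + 1, n - (l - 1)) ∈ P := hstk (l - 1) (by omega)
        have hm' : m ≤ (n - (l - 1)) - ((l - 1) + 1) - 1 := by
          apply h.1.2.2.2 _ hpl
          intro x hx1 hx2 hPx
          obtain ⟨p', hp', he⟩ := hPx
          have hx1' : (l - 1) + 1 < x := hx1
          have hx2' : x < n - (l - 1) := hx2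
          rcases conf p' hp' with ⟨c, hc, rfl⟩ | hi'
          · have he' : c + 1 = x ∨ n - c = x := he
            omega
          · have : p' ∈ P.filter (fun p => l + 1 ≤ p.1) :=
              Finset.mem_filter.2 ⟨hp', hi'.1⟩
            rw [hemp] at this
            exact absurd this (Finset.notMem_empty _)
        omega
      · left
        exact ⟨(p0.1 - l, p0.2 - l), Finset.mem_image_of_mem _ hp0⟩
  · -- backward membership
    intro Q hQ
    rw [innerFinset, Finset.mem_filter] at hQ
    obtain ⟨hQsec, hne, hhp⟩ := hQ
    have hQ' := mem_secFinset.1 hQsec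
    have hbQ := hQ'.1.1
    refine Finset.mem_filter.2 ⟨mem_secFinset.2 ?_, ?_, ?_⟩
    · have := wrap hs hl (show n = (n - 2 * l) + 2 * l by omega) hQ' hne hhp
      exact this
    · intro c hc
      exact Finset.mem_union_left _ (mem_stackSet.2 ⟨c, hc, rfl⟩)
    · intro hmem'
      rcases Finset.mem_union.1 hmem' with hst | hsh
      · obtain ⟨c, hc, he⟩ := mem_stackSet.1 hst
        have he1 : l + 1 = c + 1 := congrArg Prod.fst he
        omega
      · obtain ⟨a, b, hab, he⟩ := mem_shiftUp' hsh
        have he1 : l + 1 = a + l := congrArg Prod.fst he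
        have he2 : n - l = b + l := congrArg Prod.snd he
        apply hne
        have : (a, b) = (1, n - 2 * l) := by
          rw [Prod.mk.injEq]
          omega
        rwa [this] at hab
  · -- left inverse
    intro P hP
    rw [Finset.mem_filter] at hP
    obtain ⟨hPsec, hstk, hmax⟩ := hP
    have h := mem_secFinset.1 hPsec
    have conf := confineII h hstk
    have hbnd := h.1.1
    rw [shiftUp_shiftDown (by
      intro p hp
      rw [Finset.mem_filter] at hp
      exact ⟨by omega, (hbnd _ hp.1).2.1⟩)]
    ext p
    simp only [Finset.mem_union, Finset.mem_filter]
    constructor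
    · rintro (hst | ⟨h1, _⟩)
      · obtain ⟨c, hc, rfl⟩ := mem_stackSet.1 hst
        exact hstk c hc
      · exact h1
    · intro hp
      rcases conf p hp with ⟨c, hc, rfl⟩ | hi
      · exact Or.inl (mem_stackSet.2 ⟨c, hc, rfl⟩)
      · exact Or.inr ⟨hp, hi.1⟩
  · -- right inverse
    intro Q hQ
    rw [innerFinset, Finset.mem_filter] at hQ
    have hbQ := (mem_secFinset.1 hQ.1).1.1
    have hfe : (stackSet l n ∪ shiftUp l Q).filter (fun p => l + 1 ≤ p.1) = shiftUp l Q := by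
      ext p
      simp only [Finset.mem_filter, Finset.mem_union]
      constructor
      · rintro ⟨hst | hsh, h2⟩
        · obtain ⟨c, hc, rfl⟩ := mem_stackSet.1 hst
          have : l + 1 ≤ c + 1 := h2
          omega
        · exact hsh
      · intro hp
        obtain ⟨a, b, hab, rfl⟩ := mem_shiftUp' hp
        have := hbQ _ hab
        exact ⟨Or.inr hp, by omega⟩
    rw [hfe, shiftDown_shiftUp]

end SecAux
namespace SecAux
open Finset

lemma b_eq_sum (s m : ℕ) (hs : 1 ≤ s) (n : ℕ) :
    secCountB s m n = ∑ l ∈ Finset.Icc s (n / 2), (innerFinset s m (n - 2 * l)).card := by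
  have hbi : (secFinset s m n).filter (fun P => (1, n) ∈ P)
      = (Finset.Icc s (n / 2)).biUnion (fun l => (secFinset s m n).filter
          (fun P => (∀ c < l, (c + 1, n - c) ∈ P) ∧ (l + 1, n - l) ∉ P)) := by
    ext P
    simp only [Finset.mem_filter, Finset.mem_biUnion, Finset.mem_Icc]
    constructor
    · rintro ⟨hPsec, hmem⟩
      have h := mem_secFinset.1 hPsec
      have hbnd := h.1.1
      have hex : ∃ c, (c + 1, n - c) ∉ P := by
        refine ⟨n, fun hin => ?_⟩
        have : 1 ≤ n + 1 ∧ n + 1 < n - n ∧ n - n ≤ n := hbnd _ hin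
        omega
      set l := Nat.find hex with hldef
      have hnot : (l + 1, n - l) ∉ P := Nat.find_spec hex
      have hall : ∀ c < l, (c + 1, n - c) ∈ P := by
        intro c hc
        have := Nat.find_min hex hc
        exact not_not.1 this
      have h0 : ((1, n).1 - 1, (1, n).2 + 1) ∉ P := by
        intro hin
        have : 1 ≤ (0 : ℕ) ∧ (0 : ℕ) < n + 1 ∧ n + 1 ≤ n := hbnd _ hin
        omega
      obtain ⟨t, hts, hrun⟩ := h.2 _ hmem h0
      have htl : t ≤ l := by
        rw [hldef, Nat.le_find_iff]
        intro j hj hnotin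
        apply hnotin
        have := hrun j hj
        have he : ((1, n).1 + j, (1, n).2 - j) = (j + 1, n - j) := by
          show (1 + j, n - j) = _
          rw [Prod.mk.injEq]
          omega
        rwa [he] at this
      have hl1 : 1 ≤ l := by omega
      have h2l : 2 * l ≤ n := by
        have hin := hall (l - 1) (by omega)
        have : 1 ≤ l - 1 + 1 ∧ l - 1 + 1 < n - (l - 1) ∧ n - (l - 1) ≤ n := hbnd _ hin
        omega
      exact ⟨l, ⟨by omega, by omega⟩, hPsec, hall, hnot⟩
    · rintro ⟨l, ⟨hsl, hln⟩, hPsec, hall, hnot⟩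
      refine ⟨hPsec, ?_⟩
      have := hall 0 (by omega)
      have he : ((0 : ℕ) + 1, n - 0) = (1, n) := by
        rw [Prod.mk.injEq]
        omega
      rwa [he] at this
  have hdisj : ∀ l ∈ Finset.Icc s (n / 2), ∀ l' ∈ Finset.Icc s (n / 2), l ≠ l' →
      Disjoint ((secFinset s m n).filter
          (fun P => (∀ c < l, (c + 1, n - c) ∈ P) ∧ (l + 1, n - l) ∉ P))
        ((secFinset s m n).filter
          (fun P => (∀ c < l', (c + 1, n - c) ∈ P) ∧ (l' + 1, n - l') ∉ P)) := by
    intro l _ l' _ hne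
    rw [Finset.disjoint_left]
    intro P h1 h2
    rw [Finset.mem_filter] at h1 h2
    rcases Nat.lt_or_ge l l' with hlt | hge
    · exact h1.2.2 (h2.2.1 l hlt)
    · have hlt' : l' < l := by omega
      exact h2.2.2 (h1.2.1 l' hlt')
  rw [secCountB, hbi, Finset.card_biUnion hdisj]
  refine Finset.sum_congr rfl (fun l hl => ?_)
  rw [Finset.mem_Icc] at hl
  exact fiberII_card s m n l hs hl.1 (by omega)

lemma inner_count_eq (s m q : ℕ) :
    (innerFinset s m q).card + secCountB s m q + (if q < m then 1 else 0)
      = secCount s m q := by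
  have h1 := Finset.card_filter_add_card_filter_not
    (s := secFinset s m q) (p := fun Q => (1, q) ∈ Q)
  have h2 := Finset.card_filter_add_card_filter_not
    (s := (secFinset s m q).filter (fun Q => ¬ (1, q) ∈ Q))
    (p := fun Q => Q.Nonempty ∨ m ≤ q)
  have hinner : ((secFinset s m q).filter (fun Q => ¬ (1, q) ∈ Q)).filter
      (fun Q => Q.Nonempty ∨ m ≤ q) = innerFinset s m q := by
    rw [Finset.filter_filter, innerFinset]
  have hrest : (((secFinset s m q).filter (fun Q => ¬ (1, q) ∈ Q)).filter
      (fun Q => ¬ (Q.Nonempty ∨ m ≤ q))).card = if q < m then 1 else 0 := by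
    by_cases hqm : q < m
    · rw [if_pos hqm]
      have : ((secFinset s m q).filter (fun Q => ¬ (1, q) ∈ Q)).filter
          (fun Q => ¬ (Q.Nonempty ∨ m ≤ q)) = {∅} := by
        ext Q
        simp only [Finset.mem_filter, Finset.mem_singleton, not_or]
        constructor
        · rintro ⟨⟨_, _⟩, hnon, _⟩
          exact Finset.not_nonempty_iff_eq_empty.1 hnon
        · rintro rfl
          refine ⟨⟨empty_mem s m q, ?_⟩, ?_, by omega⟩
          · exact Finset.notMem_empty _
          · exact fun h => Finset.not_nonempty_empty h
      rw [this, Finset.card_singleton]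
    · rw [if_neg hqm]
      rw [Finset.card_eq_zero, Finset.filter_eq_empty_iff]
      intro Q _
      exact not_not_intro (Or.inr (by omega))
  rw [hinner] at h2
  rw [secCountB, secCount] at *
  omega

lemma b_step (s m : ℕ) (hs : 1 ≤ s) (n : ℕ) :
    secCountB s m n = (if 2 ≤ n then secCountB s m (n - 2) else 0)
      + (if 2 * s ≤ n then (innerFinset s m (n - 2 * s)).card else 0) := by
  rcases Nat.lt_or_ge n 2 with hn2 | hn2
  · rw [if_neg (by omega), if_neg (by omega), b_eq_sum s m hs n,
      show n / 2 = 0 by omega]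
    rw [Finset.Icc_eq_empty (by omega), Finset.sum_empty]
    omega
  · rw [if_pos hn2, b_eq_sum s m hs n, b_eq_sum s m hs (n - 2)]
    rcases Nat.lt_or_ge n (2 * s) with hns | hns
    · rw [if_neg (by omega)]
      rw [Finset.Icc_eq_empty (by omega), Finset.sum_empty,
        Finset.Icc_eq_empty (by omega), Finset.sum_empty]
      omega
    · rw [if_pos hns]
      have hsn2 : s ≤ n / 2 := by omega
      have hins : Finset.Icc s (n / 2) = insert s (Finset.Icc (s + 1) (n / 2)) := by
        ext x
        simp only [Finset.mem_Icc, Finset.mem_insert]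
        omega
      rw [hins, Finset.sum_insert (by simp only [Finset.mem_Icc]; omega)]
      have hre : ∑ l ∈ Finset.Icc (s + 1) (n / 2), (innerFinset s m (n - 2 * l)).card
          = ∑ l ∈ Finset.Icc s ((n - 2) / 2), (innerFinset s m (n - 2 - 2 * l)).card := by
        refine Finset.sum_nbij' (fun l => l - 1) (fun l => l + 1) ?_ ?_ ?_ ?_ ?_
        · intro l hl
          rw [Finset.mem_Icc] at hl ⊢
          omega
        · intro l hl
          rw [Finset.mem_Icc] at hl ⊢
          omega
        · intro l hl
          rw [Finset.mem_Icc] at hl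
          omega
        · intro l hl
          rw [Finset.mem_Icc] at hl
          omega
        · intro l hl
          rw [Finset.mem_Icc] at hl
          rw [show n - 2 - 2 * (l - 1) = n - 2 * l by omega]
      rw [hre, Nat.add_comm]

end SecAux
namespace SecAux
open Finset

noncomputable def Rgf (s m : ℕ) : PowerSeries ℚ :=
  PowerSeries.mk fun n => (secCount s m n : ℚ)

noncomputable def Igf (s m : ℕ) : PowerSeries ℚ :=
  PowerSeries.mk fun q => ((innerFinset s m q).card : ℚ)

lemma coeff_Tmgf (m q : ℕ) :
    PowerSeries.coeff q (Tmgf m) = if q < m then 1 else 0 := by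
  rw [Tmgf, map_sum]
  simp only [PowerSeries.coeff_X_pow]
  rw [Finset.sum_ite_eq (Finset.range m) q (fun _ => (1 : ℚ))]
  simp [Finset.mem_range]

lemma gf1 (s m : ℕ) (hm : 1 ≤ m) :
    Rgf s m = 1 + PowerSeries.X * Rgf s m + Rgf s m * Bgf s m := by
  ext n
  rw [map_add, map_add, PowerSeries.coeff_one]
  cases n with
  | zero =>
    rw [PowerSeries.coeff_zero_X_mul, PowerSeries.coeff_mul,
      Finset.Nat.sum_antidiagonal_eq_sum_range_succ_mk]
    simp only [Rgf, Bgf, PowerSeries.coeff_mk]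
    rw [Finset.sum_range_one]
    norm_num [r_zero, b_small s m hm 0 (by omega)]
  | succ n =>
    rw [PowerSeries.coeff_succ_X_mul, PowerSeries.coeff_mul,
      Finset.Nat.sum_antidiagonal_eq_sum_range_succ_mk, if_neg (Nat.succ_ne_zero n)]
    simp only [Rgf, Bgf, PowerSeries.coeff_mk]
    have hrec := recI s m hm (n + 1) (by omega)
    rw [show n + 1 - 1 = n from rfl] at hrec
    have hcast : (secCount s m (n + 1) : ℚ) = (secCount s m n : ℚ)
        + ∑ j ∈ Finset.range (n + 2), (secCount s m (n + 1 - j) : ℚ)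
          * (secCountB s m j : ℚ) := by
      exact_mod_cast congrArg (fun x : ℕ => (x : ℚ)) hrec
    rw [hcast]
    have hrefl := Finset.sum_range_reflect
      (fun k => (secCount s m k : ℚ) * (secCountB s m (n + 1 - k) : ℚ)) (n + 2)
    have hre : ∑ k ∈ Finset.range (n + 2),
          (secCount s m k : ℚ) * (secCountB s m (n + 1 - k) : ℚ)
        = ∑ j ∈ Finset.range (n + 2),
          (secCount s m (n + 1 - j) : ℚ) * (secCountB s m j : ℚ) := by
      rw [← hrefl]
      refine Finset.sum_congr rfl fun j hj => ?_
      rw [Finset.mem_range] at hj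
      rw [show n + 2 - 1 - j = n + 1 - j by omega, show n + 1 - (n + 1 - j) = j by omega]
    rw [hre]
    ring

lemma gf2 (s m : ℕ) (hs : 1 ≤ s) :
    (1 - PowerSeries.X ^ 2) * Bgf s m = PowerSeries.X ^ (2 * s) * Igf s m := by
  ext n
  rw [sub_mul, one_mul, map_sub, PowerSeries.coeff_X_pow_mul', PowerSeries.coeff_X_pow_mul']
  simp only [Bgf, Igf, PowerSeries.coeff_mk]
  have hstep := b_step s m hs n
  rcases le_or_gt 2 n with h2n | h2n <;> rcases le_or_gt (2 * s) n with hsn | hsn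
  · rw [if_pos h2n, if_pos hsn]
    rw [if_pos h2n, if_pos hsn] at hstep
    rw [hstep]
    push_cast
    ring
  · rw [if_pos h2n, if_neg (by omega)]
    rw [if_pos h2n, if_neg (by omega)] at hstep
    rw [hstep]
    push_cast
    ring
  · rw [if_neg (by omega), if_pos hsn]
    rw [if_neg (by omega), if_pos hsn] at hstep
    rw [hstep]
    push_cast
    ring
  · rw [if_neg (by omega), if_neg (by omega)]
    rw [if_neg (by omega), if_neg (by omega)] at hstep
    rw [hstep]
    push_cast
    ring

lemma gf3 (s m : ℕ) : Rgf s m = Igf s m + Bgf s m + Tmgf m := by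
  ext q
  rw [map_add, map_add, coeff_Tmgf]
  simp only [Rgf, Igf, Bgf, PowerSeries.coeff_mk]
  have hic := inner_count_eq s m q
  rcases le_or_gt m q with h | h
  · rw [if_neg (by omega)]
    rw [if_neg (by omega)] at hic
    rw [← hic]
    push_cast
    ring
  · rw [if_pos h]
    rw [if_pos h] at hic
    rw [← hic]
    push_cast
    ring

end SecAux

theorem stmt3 (s m : ℕ) (hs : 1 ≤ s) (hm : 1 ≤ m) :
    (2 * (1 - PowerSeries.X ^ 2 + PowerSeries.X ^ (2 * s)) * Bgf s m
        - (1 - PowerSeries.X) * (1 - PowerSeries.X ^ 2 + PowerSeries.X ^ (2 * s))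
        + PowerSeries.X ^ (2 * s) * Tmgf m) ^ 2
      = ((1 - PowerSeries.X) * (1 - PowerSeries.X ^ 2 + PowerSeries.X ^ (2 * s))
          + PowerSeries.X ^ (2 * s) * Tmgf m) ^ 2
        - 4 * PowerSeries.X ^ (2 * s)
          * (1 - PowerSeries.X ^ 2 + PowerSeries.X ^ (2 * s)) := by
  have h1 := SecAux.gf1 s m hm
  have h2 := SecAux.gf2 s m hs
  have h3 := SecAux.gf3 s m
  have h2' : PowerSeries.X ^ (2 * s) * SecAux.Rgf s m
      = (1 - PowerSeries.X ^ 2 + PowerSeries.X ^ (2 * s)) * Bgf s m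
        + PowerSeries.X ^ (2 * s) * Tmgf m := by
    linear_combination (PowerSeries.X : PowerSeries ℚ) ^ (2 * s) * h3 - h2
  linear_combination
    (-4 * (1 - PowerSeries.X ^ 2 + PowerSeries.X ^ (2 * s))
      * PowerSeries.X ^ (2 * s) : PowerSeries ℚ) * h1
    + (-4 * (1 - PowerSeries.X ^ 2 + PowerSeries.X ^ (2 * s))
      * (Bgf s m - 1 + PowerSeries.X) : PowerSeries ℚ) * h2'
end
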